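/- arXiv:0705.3925 — 5 statements merged into one kernel-verified Lean document; each statement's English description precedes it below -/
import Mathlib

section
/- For real numbers x_1 > x_2 > ⋯ > x_{2l} (all distinct) and a function f with f(x) ≠ 0 for all x, the Pfaffian of the 2l×2l antisymmetric matrix with (j,k) entry (f(x_j)/f(x_k))^{sgn(x_j - x_k)} · sgn(x_j - x_k) equals ∏_{j=1}^{l} f(x_{2j-1})/f(x_{2j}). -/
open Finset

/-- The first element of the `i`-th pair in `Fin (2*n)`. -/
def pairLo {n : ℕ} (i : Fin n) : Fin (2 * n) := ⟨2 * i.1, by have := i.isLt; omega⟩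

/-- The second element of the `i`-th pair in `Fin (2*n)`. -/
def pairHi {n : ℕ} (i : Fin n) : Fin (2 * n) := ⟨2 * i.1 + 1, by have := i.isLt; omega⟩

/-- The Pfaffian of a `2n × 2n` matrix, defined as the sum over perfect matchings
(encoded as permutations in canonical form) of the signed product of entries. -/
def pf {n : ℕ} {R : Type*} [CommRing R] (A : Matrix (Fin (2 * n)) (Fin (2 * n)) R) : R :=
  ∑ σ ∈ Finset.univ.filter
      (fun σ : Equiv.Perm (Fin (2 * n)) =>
        (∀ i : Fin n, σ (pairLo i) < σ (pairHi i)) ∧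
        ∀ i j : Fin n, i < j → σ (pairLo i) < σ (pairLo j)),
    (Equiv.Perm.sign σ : ℤ) • ∏ i : Fin n, A (σ (pairLo i)) (σ (pairHi i))

/-- The integer sign of the difference `a - b` of two reals. -/
noncomputable def sgnz (a b : ℝ) : ℤ := if b < a then 1 else if a < b then -1 else 0

namespace PfAux
variable {l : ℕ}

lemma pairLo_ne_pairHi (i j : Fin l) : pairLo i ≠ pairHi j := by
  intro h; have := congrArg Fin.val h; simp [pairLo, pairHi] at this; omega

lemma pairHi_inj {i j : Fin l} (h : pairHi i = pairHi j) : i = j := by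
  have := congrArg Fin.val h; simp [pairHi] at this; exact Fin.ext this

def half (p : Fin (2*l)) : Fin l := ⟨p.1/2, by have := p.isLt; omega⟩

lemma pair_cover (p : Fin (2*l)) : p = pairLo (half p) ∨ p = pairHi (half p) := by
  rcases Nat.even_or_odd p.1 with h | h
  · left; apply Fin.ext; rcases h with ⟨m, hm⟩; simp [pairLo, half]; omega
  · right; apply Fin.ext; rcases h with ⟨m, hm⟩; simp [pairHi, half]; omega

lemma eq_one_of_pairs (σ : Equiv.Perm (Fin (2*l)))
    (h : ∀ m : Fin l, σ (pairLo m) = pairLo m ∧ σ (pairHi m) = pairHi m) : σ = 1 := by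
  ext p
  rcases pair_cover p with hp | hp
  · rw [hp]; exact congrArg Fin.val (h (half p)).1
  · rw [hp]; exact congrArg Fin.val (h (half p)).2

noncomputable def kk (σ : Equiv.Perm (Fin (2*l))) : ℕ :=
  sInf {m | ∃ h : m < l, σ (pairLo ⟨m,h⟩) ≠ pairLo ⟨m,h⟩ ∨ σ (pairHi ⟨m,h⟩) ≠ pairHi ⟨m,h⟩}

noncomputable def cc (σ : Equiv.Perm (Fin (2*l))) : ℕ :=
  sInf {v | ∃ m : Fin l, kk σ ≤ m.1 ∧ (σ (pairHi m)).1 = v}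

noncomputable def gmap (σ : Equiv.Perm (Fin (2*l))) : Equiv.Perm (Fin (2*l)) :=
  if h : 0 < l then
    σ * Equiv.swap
      (pairHi (half (σ.symm ⟨(cc σ - 2) % (2*l), Nat.mod_lt _ (by omega)⟩)))
      (pairHi (half (σ.symm ⟨(cc σ - 1) % (2*l), Nat.mod_lt _ (by omega)⟩)))
  else σ

variable {σ : Equiv.Perm (Fin (2*l))}

lemma kk_mem (hne : σ ≠ 1) :
    ∃ h : kk σ < l, σ (pairLo ⟨kk σ, h⟩) ≠ pairLo ⟨kk σ, h⟩ ∨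
      σ (pairHi ⟨kk σ, h⟩) ≠ pairHi ⟨kk σ, h⟩ := by
  apply Nat.sInf_mem (s := {m | ∃ h : m < l, _})
  have : ∃ m : Fin l, ¬ (σ (pairLo m) = pairLo m ∧ σ (pairHi m) = pairHi m) := by
    by_contra h; push_neg at h
    exact hne (eq_one_of_pairs σ (fun m => ⟨(h m).1, (h m).2⟩))
  obtain ⟨m, hm⟩ := this
  rw [not_and_or] at hm
  exact ⟨m.1, m.isLt, hm⟩

lemma kk_lt (hne : σ ≠ 1) : kk σ < l := (kk_mem hne).1

lemma kk_min (m : Fin l) (hm : m.1 < kk σ) :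
    σ (pairLo m) = pairLo m ∧ σ (pairHi m) = pairHi m := by
  by_contra h
  rw [not_and_or] at h
  have hmem : m.1 ∈ {m | ∃ h : m < l, σ (pairLo ⟨m,h⟩) ≠ pairLo ⟨m,h⟩ ∨
      σ (pairHi ⟨m,h⟩) ≠ pairHi ⟨m,h⟩} := ⟨m.isLt, h⟩
  have h2 : kk σ ≤ m.1 := Nat.sInf_le hmem
  omega

lemma fix_small (p : Fin (2*l)) (hp : p.1 < 2 * kk σ) : σ p = p := by
  rcases pair_cover p with h | h
  · have hv := congrArg Fin.val h
    rw [h]; exact (kk_min (half p) (by simp only [pairLo] at hv; omega)).1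
  · have hv := congrArg Fin.val h
    rw [h]; exact (kk_min (half p) (by simp only [pairHi] at hv; omega)).2

lemma ge_of_ge (p : Fin (2*l)) (hp : 2 * kk σ ≤ p.1) : 2 * kk σ ≤ (σ p).1 := by
  by_contra h
  push_neg at h
  have := fix_small (σ := σ) (σ p) h
  have := σ.injective this
  omega

lemma le_of_apply (p : Fin (2*l)) (hp : 2 * kk σ ≤ (σ p).1) : 2 * kk σ ≤ p.1 := by
  by_contra h
  push_neg at h
  have := fix_small (σ := σ) p h
  rw [this] at hp
  omega

lemma cc_mem (hne : σ ≠ 1) : ∃ m : Fin l, kk σ ≤ m.1 ∧ (σ (pairHi m)).1 = cc σ := by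
  have h : {v | ∃ m : Fin l, kk σ ≤ m.1 ∧ (σ (pairHi m)).1 = v}.Nonempty :=
    ⟨_, ⟨⟨kk σ, kk_lt hne⟩, le_refl _, rfl⟩⟩
  exact Nat.sInf_mem h

lemma cc_le (m : Fin l) (hm : kk σ ≤ m.1) : cc σ ≤ (σ (pairHi m)).1 :=
  Nat.sInf_le ⟨m, hm, rfl⟩

lemma cc_lt (hne : σ ≠ 1) : cc σ < 2*l := by
  obtain ⟨m, _, h⟩ := cc_mem hne; rw [← h]; exact (σ _).isLt

lemma hi_big (hlt : ∀ i : Fin l, σ (pairLo i) < σ (pairHi i)) (m : Fin l)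
    (hm : kk σ ≤ m.1) : 2 * kk σ + 1 ≤ (σ (pairHi m)).1 := by
  have h1 : 2 * kk σ ≤ (σ (pairLo m)).1 :=
    ge_of_ge _ (by simp only [pairLo]; omega)
  have h2 : (σ (pairLo m)).1 < (σ (pairHi m)).1 := hlt m
  omega

lemma cc_ge (hlt : ∀ i : Fin l, σ (pairLo i) < σ (pairHi i))
    (hmono : ∀ i j : Fin l, i < j → σ (pairLo i) < σ (pairLo j))
    (hne : σ ≠ 1) : 2 * kk σ + 2 ≤ cc σ := by
  obtain ⟨m₀, hm₀, hv⟩ := cc_mem hne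
  have h1 : 2 * kk σ + 1 ≤ cc σ := by rw [← hv]; exact hi_big hlt m₀ hm₀
  by_contra h
  have hcc : cc σ = 2 * kk σ + 1 := by omega
  have hLlb : 2 * kk σ ≤ (σ (pairLo m₀)).1 := ge_of_ge _ (by simp only [pairLo]; omega)
  have hLub : (σ (pairLo m₀)).1 < (σ (pairHi m₀)).1 := hlt m₀
  have hLeq : (σ (pairLo m₀)).1 = 2 * kk σ := by omega
  obtain ⟨hk, hbad⟩ := kk_mem hne
  have hKm : ¬ ((⟨kk σ, hk⟩ : Fin l) < m₀) := by
    intro hlt'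
    have h4 : (σ (pairLo ⟨kk σ, hk⟩)).1 < (σ (pairLo m₀)).1 := hmono _ m₀ hlt'
    have h3 : 2 * kk σ ≤ (σ (pairLo ⟨kk σ, hk⟩)).1 := ge_of_ge _ (le_of_eq rfl)
    omega
  have hm₀K : m₀ = ⟨kk σ, hk⟩ := by
    apply Fin.ext
    have h5 : ¬ (kk σ < m₀.1) := fun h' => hKm h'
    show m₀.1 = kk σ
    omega
  rw [hm₀K] at hLeq hv
  rcases hbad with hb | hb
  · apply hb; apply Fin.ext
    show (σ (pairLo ⟨kk σ, hk⟩)).1 = 2 * kk σ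
    exact hLeq
  · apply hb; apply Fin.ext
    show (σ (pairHi ⟨kk σ, hk⟩)).1 = 2 * kk σ + 1
    omega

lemma lo_at (hlt : ∀ i : Fin l, σ (pairLo i) < σ (pairHi i))
    (hmono : ∀ i j : Fin l, i < j → σ (pairLo i) < σ (pairLo j))
    (hne : σ ≠ 1) (v : ℕ) (hv1 : 2 * kk σ ≤ v) (hv2 : v < cc σ) :
    ∃ i : Fin l, kk σ ≤ i.1 ∧ (σ (pairLo i)).1 = v ∧ cc σ ≤ (σ (pairHi i)).1 := by
  have hvl : v < 2*l := lt_trans hv2 (cc_lt hne)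
  set p := σ.symm ⟨v, hvl⟩ with hpdef
  have hps : σ p = ⟨v, hvl⟩ := σ.apply_symm_apply _
  have hpge : 2 * kk σ ≤ p.1 := le_of_apply p (by rw [hps]; exact hv1)
  rcases pair_cover p with h | h
  · have hv' : p.1 = 2 * (half p).1 := congrArg Fin.val h
    refine ⟨half p, by omega, ?_, cc_le (σ := σ) (half p) (by omega)⟩
    rw [← h, hps]
  · exfalso
    have hv' : p.1 = 2 * (half p).1 + 1 := congrArg Fin.val h
    have h2 := cc_le (σ := σ) (half p) (by omega)
    rw [← h, hps] at h2
    have h3 : cc σ ≤ v := h2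
    omega

lemma exists_ij (hlt : ∀ i : Fin l, σ (pairLo i) < σ (pairHi i))
    (hmono : ∀ i j : Fin l, i < j → σ (pairLo i) < σ (pairLo j))
    (hne : σ ≠ 1) :
    ∃ i j : Fin l, i ≠ j ∧ kk σ ≤ i.1 ∧ kk σ ≤ j.1 ∧
      (σ (pairLo i)).1 = cc σ - 2 ∧ (σ (pairLo j)).1 = cc σ - 1 ∧
      cc σ ≤ (σ (pairHi i)).1 ∧ cc σ ≤ (σ (pairHi j)).1 := by
  have hge := cc_ge hlt hmono hne
  obtain ⟨i, hi1, hi2, hi3⟩ := lo_at hlt hmono hne (cc σ - 2) (by omega) (by omega)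
  obtain ⟨j, hj1, hj2, hj3⟩ := lo_at hlt hmono hne (cc σ - 1) (by omega) (by omega)
  refine ⟨i, j, ?_, hi1, hj1, hi2, hj2, hi3, hj3⟩
  intro hij
  rw [hij, hj2] at hi2
  omega

lemma gmap_eq (hlt : ∀ i : Fin l, σ (pairLo i) < σ (pairHi i))
    (hmono : ∀ i j : Fin l, i < j → σ (pairLo i) < σ (pairLo j))
    (hne : σ ≠ 1) {i j : Fin l}
    (hvi : (σ (pairLo i)).1 = cc σ - 2) (hvj : (σ (pairLo j)).1 = cc σ - 1) :
    gmap σ = σ * Equiv.swap (pairHi i) (pairHi j) := by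
  have hl : 0 < l := lt_of_le_of_lt (Nat.zero_le _) (kk_lt hne)
  have hclt := cc_lt hne
  have hge := cc_ge hlt hmono hne
  rw [gmap, dif_pos hl]
  have e2 : ∀ h, half (σ.symm (⟨(cc σ - 2) % (2*l), h⟩ : Fin (2*l))) = i := by
    intro h
    have hs : σ.symm (⟨(cc σ - 2) % (2*l), h⟩ : Fin (2*l)) = pairLo i := by
      apply (Equiv.symm_apply_eq σ).2
      apply Fin.ext
      show (cc σ - 2) % (2*l) = (σ (pairLo i)).1
      rw [Nat.mod_eq_of_lt (by omega), hvi]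
    rw [hs]
    apply Fin.ext
    show (2 * i.1) / 2 = i.1
    omega
  have e1 : ∀ h, half (σ.symm (⟨(cc σ - 1) % (2*l), h⟩ : Fin (2*l))) = j := by
    intro h
    have hs : σ.symm (⟨(cc σ - 1) % (2*l), h⟩ : Fin (2*l)) = pairLo j := by
      apply (Equiv.symm_apply_eq σ).2
      apply Fin.ext
      show (cc σ - 1) % (2*l) = (σ (pairLo j)).1
      rw [Nat.mod_eq_of_lt (by omega), hvj]
    rw [hs]
    apply Fin.ext
    show (2 * j.1) / 2 = j.1
    omega
  rw [e2, e1]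

lemma ev_lo (i j : Fin l) (m : Fin l) :
    (σ * Equiv.swap (pairHi i) (pairHi j)) (pairLo m) = σ (pairLo m) := by
  rw [Equiv.Perm.mul_apply,
    Equiv.swap_apply_of_ne_of_ne (pairLo_ne_pairHi m i) (pairLo_ne_pairHi m j)]

lemma ev_hi (i j : Fin l) (m : Fin l) :
    (σ * Equiv.swap (pairHi i) (pairHi j)) (pairHi m) = σ (pairHi (Equiv.swap i j m)) := by
  rw [Equiv.Perm.mul_apply]
  rcases eq_or_ne m i with rfl | hmi
  · rw [Equiv.swap_apply_left, Equiv.swap_apply_left]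
  rcases eq_or_ne m j with rfl | hmj
  · rw [Equiv.swap_apply_right, Equiv.swap_apply_right]
  · rw [Equiv.swap_apply_of_ne_of_ne (fun h => hmi (pairHi_inj h)) (fun h => hmj (pairHi_inj h)),
      Equiv.swap_apply_of_ne_of_ne hmi hmj]

lemma swap_ge {i j : Fin l} (hik : kk σ ≤ i.1) (hjk : kk σ ≤ j.1)
    (m : Fin l) (hm : kk σ ≤ m.1) : kk σ ≤ (Equiv.swap i j m).1 := by
  by_cases h1 : m = i
  · rw [h1, Equiv.swap_apply_left]; exact hjk
  by_cases h2 : m = j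
  · rw [h2, Equiv.swap_apply_right]; exact hik
  · rw [Equiv.swap_apply_of_ne_of_ne h1 h2]; exact hm

section tau
variable {i j : Fin l}
  (hlt : ∀ m : Fin l, σ (pairLo m) < σ (pairHi m))
  (hmono : ∀ m m' : Fin l, m < m' → σ (pairLo m) < σ (pairLo m'))
  (hne : σ ≠ 1)
  (hij : i ≠ j) (hik : kk σ ≤ i.1) (hjk : kk σ ≤ j.1)
  (hvi : (σ (pairLo i)).1 = cc σ - 2) (hvj : (σ (pairLo j)).1 = cc σ - 1)
  (hHi : cc σ ≤ (σ (pairHi i)).1) (hHj : cc σ ≤ (σ (pairHi j)).1)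

include hlt hmono hne hij hik hjk hvi hvj hHi hHj

lemma tau_lt (m : Fin l) :
    (σ * Equiv.swap (pairHi i) (pairHi j)) (pairLo m)
      < (σ * Equiv.swap (pairHi i) (pairHi j)) (pairHi m) := by
  have hge := cc_ge hlt hmono hne
  rw [ev_lo, ev_hi]
  rcases eq_or_ne m i with rfl | hmi
  · rw [Equiv.swap_apply_left]
    show (σ (pairLo m)).1 < (σ (pairHi j)).1
    omega
  rcases eq_or_ne m j with rfl | hmj
  · rw [Equiv.swap_apply_right]
    show (σ (pairLo m)).1 < (σ (pairHi i)).1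
    omega
  · rw [Equiv.swap_apply_of_ne_of_ne hmi hmj]
    exact hlt m

lemma tau_mono (m m' : Fin l) (hmm : m < m') :
    (σ * Equiv.swap (pairHi i) (pairHi j)) (pairLo m)
      < (σ * Equiv.swap (pairHi i) (pairHi j)) (pairLo m') := by
  rw [ev_lo, ev_lo]; exact hmono m m' hmm

lemma tau_ne_one : σ * Equiv.swap (pairHi i) (pairHi j) ≠ 1 := by
  intro h1
  have hge := cc_ge hlt hmono hne
  have e1 : (σ * Equiv.swap (pairHi i) (pairHi j)) (pairLo i) = pairLo i := by
    rw [h1]; rfl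
  have e2 : (σ * Equiv.swap (pairHi i) (pairHi j)) (pairHi i) = pairHi i := by
    rw [h1]; rfl
  rw [ev_lo] at e1
  rw [ev_hi, Equiv.swap_apply_left] at e2
  have v1 : (σ (pairLo i)).1 = 2 * i.1 := congrArg Fin.val e1
  have v2 : (σ (pairHi j)).1 = 2 * i.1 + 1 := congrArg Fin.val e2
  omega

lemma kk_tau : kk (σ * Equiv.swap (pairHi i) (pairHi j)) = kk σ := by
  have hge := cc_ge hlt hmono hne
  have hk := kk_lt hne
  have hmemS : kk σ ∈ {m | ∃ h : m < l,
      (σ * Equiv.swap (pairHi i) (pairHi j)) (pairLo ⟨m,h⟩) ≠ pairLo ⟨m,h⟩ ∨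
      (σ * Equiv.swap (pairHi i) (pairHi j)) (pairHi ⟨m,h⟩) ≠ pairHi ⟨m,h⟩} := by
    refine ⟨hk, Or.inr ?_⟩
    intro hbad
    rw [ev_hi] at hbad
    have hsw : kk σ ≤ (Equiv.swap i j ⟨kk σ, hk⟩).1 := swap_ge hik hjk _ (le_refl _)
    have h3 := cc_le (σ := σ) (Equiv.swap i j ⟨kk σ, hk⟩) hsw
    have v1 : (σ (pairHi (Equiv.swap i j ⟨kk σ, hk⟩))).1 = 2 * kk σ + 1 :=
      congrArg Fin.val hbad
    omega
  apply le_antisymm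
  · exact Nat.sInf_le hmemS
  · by_contra hcon
    push_neg at hcon
    obtain ⟨hlt', hbad'⟩ := kk_mem (tau_ne_one hlt hmono hne hij hik hjk hvi hvj hHi hHj)
    have hfix := kk_min (σ := σ)
      ⟨kk (σ * Equiv.swap (pairHi i) (pairHi j)), hlt'⟩ hcon
    have hmi : (⟨kk (σ * Equiv.swap (pairHi i) (pairHi j)), hlt'⟩ : Fin l) ≠ i := by
      intro h; rw [← h] at hik; simp at hik; omega
    have hmj : (⟨kk (σ * Equiv.swap (pairHi i) (pairHi j)), hlt'⟩ : Fin l) ≠ j := by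
      intro h; rw [← h] at hjk; simp at hjk; omega
    rcases hbad' with hb | hb
    · rw [ev_lo] at hb; exact hb hfix.1
    · rw [ev_hi, Equiv.swap_apply_of_ne_of_ne hmi hmj] at hb; exact hb hfix.2

lemma cc_tau : cc (σ * Equiv.swap (pairHi i) (pairHi j)) = cc σ := by
  have hkk := kk_tau hlt hmono hne hij hik hjk hvi hvj hHi hHj
  show sInf _ = sInf _
  rw [hkk]
  congr 1
  ext v
  constructor
  · rintro ⟨m, hm, hv⟩
    rw [ev_hi] at hv
    exact ⟨Equiv.swap i j m, swap_ge hik hjk m hm, hv⟩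
  · rintro ⟨m, hm, hv⟩
    refine ⟨Equiv.swap i j m, swap_ge hik hjk m hm, ?_⟩
    rw [ev_hi, Equiv.swap_apply_self]
    exact hv

lemma gmap_gmap : gmap (gmap σ) = σ := by
  have hge := cc_ge hlt hmono hne
  have hg : gmap σ = σ * Equiv.swap (pairHi i) (pairHi j) :=
    gmap_eq hlt hmono hne hvi hvj
  have hkk := kk_tau hlt hmono hne hij hik hjk hvi hvj hHi hHj
  have hcc := cc_tau hlt hmono hne hij hik hjk hvi hvj hHi hHj
  have hlt' := tau_lt hlt hmono hne hij hik hjk hvi hvj hHi hHj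
  have hmono' := tau_mono hlt hmono hne hij hik hjk hvi hvj hHi hHj
  have hne' := tau_ne_one hlt hmono hne hij hik hjk hvi hvj hHi hHj
  rw [hg]
  have hvi' : ((σ * Equiv.swap (pairHi i) (pairHi j)) (pairLo i)).1
      = cc (σ * Equiv.swap (pairHi i) (pairHi j)) - 2 := by
    rw [ev_lo, hcc]; exact hvi
  have hvj' : ((σ * Equiv.swap (pairHi i) (pairHi j)) (pairLo j)).1
      = cc (σ * Equiv.swap (pairHi i) (pairHi j)) - 1 := by
    rw [ev_lo, hcc]; exact hvj
  rw [gmap_eq hlt' hmono' hne' hvi' hvj', mul_assoc, Equiv.swap_mul_self, mul_one]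

end tau

end PfAux



/-- for `x_1 > x_2 > ⋯ > x_{2l}` and `f` nowhere vanishing, the Pfaffian of the
antisymmetric matrix with `(j,k)` entry `(f(x_j)/f(x_k))^{sgn(x_j - x_k)} · sgn(x_j - x_k)`
equals `∏_{j=1}^{l} f(x_{2j-1})/f(x_{2j})`. -/
theorem pf_sign_ratio_matrix (l : ℕ) (x : Fin (2 * l) → ℝ) (hx : StrictAnti x)
    (f : ℝ → ℝ) (hf : ∀ t, f t ≠ 0) :
    pf (Matrix.of fun j k : Fin (2 * l) =>
      (f (x j) / f (x k)) ^ (sgnz (x j) (x k)) * (sgnz (x j) (x k) : ℝ)) =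
    ∏ i : Fin l, f (x (pairLo i)) / f (x (pairHi i)) := by
  classical
  set M : Matrix (Fin (2*l)) (Fin (2*l)) ℝ := Matrix.of fun j k : Fin (2 * l) =>
      (f (x j) / f (x k)) ^ (sgnz (x j) (x k)) * (sgnz (x j) (x k) : ℝ) with hM
  have entry : ∀ a b : Fin (2*l), a < b → M a b = f (x a) / f (x b) := by
    intro a b hab
    have hxx : x b < x a := hx hab
    have hsg : sgnz (x a) (x b) = 1 := by rw [sgnz, if_pos hxx]
    simp only [hM, Matrix.of_apply, hsg]
    norm_num
  have pairlt : ∀ i : Fin l, (pairLo i : Fin (2*l)) < pairHi i :=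
    fun i => Fin.mk_lt_mk.2 (by omega)
  unfold pf
  have h1mem : (1 : Equiv.Perm (Fin (2*l))) ∈ Finset.univ.filter
      (fun σ : Equiv.Perm (Fin (2*l)) =>
        (∀ i : Fin l, σ (pairLo i) < σ (pairHi i)) ∧
        ∀ i j : Fin l, i < j → σ (pairLo i) < σ (pairLo j)) := by
    rw [Finset.mem_filter]
    refine ⟨Finset.mem_univ _, fun i => ?_, fun i j hij => ?_⟩
    · simpa using pairlt i
    · simp only [Equiv.Perm.coe_one, id_eq]
      exact Fin.mk_lt_mk.2 (by have := Fin.lt_def.1 hij; omega)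
  rw [← Finset.add_sum_erase _ _ h1mem]
  have hfact : ∀ (τ : Equiv.Perm (Fin (2*l))),
      (∀ m : Fin l, τ (pairLo m) < τ (pairHi m)) →
      ∏ m : Fin l, M (τ (pairLo m)) (τ (pairHi m))
        = (∏ m : Fin l, f (x (τ (pairLo m)))) * ∏ m : Fin l, (f (x (τ (pairHi m))))⁻¹ := by
    intro τ hτ
    rw [← Finset.prod_mul_distrib]
    exact Finset.prod_congr rfl fun m _ => by rw [entry _ _ (hτ m), div_eq_mul_inv]
  have hzero : ∑ σ ∈ (Finset.univ.filter
      (fun σ : Equiv.Perm (Fin (2*l)) =>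
        (∀ i : Fin l, σ (pairLo i) < σ (pairHi i)) ∧
        ∀ i j : Fin l, i < j → σ (pairLo i) < σ (pairLo j))).erase 1,
      (Equiv.Perm.sign σ : ℤ) • ∏ i : Fin l, M (σ (pairLo i)) (σ (pairHi i)) = 0 := by
    apply Finset.sum_involution (fun σ _ => PfAux.gmap σ)
    · intro σ ha
      have hσ := (Finset.mem_filter.1 (Finset.mem_of_mem_erase ha)).2
      have hne : σ ≠ 1 := Finset.ne_of_mem_erase ha
      obtain ⟨hlt, hmono⟩ := hσ
      obtain ⟨i, j, hij, hik, hjk, hvi, hvj, hHi, hHj⟩ := PfAux.exists_ij hlt hmono hne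
      rw [PfAux.gmap_eq hlt hmono hne hvi hvj]
      have hs : Equiv.Perm.sign (σ * Equiv.swap (pairHi i) (pairHi j))
          = - Equiv.Perm.sign σ := by
        rw [Equiv.Perm.sign_mul,
          Equiv.Perm.sign_swap (fun h => hij (PfAux.pairHi_inj h)), mul_neg_one]
      have hlt' := PfAux.tau_lt hlt hmono hne hij hik hjk hvi hvj hHi hHj
      have hp : ∏ m : Fin l,
          M ((σ * Equiv.swap (pairHi i) (pairHi j)) (pairLo m))
            ((σ * Equiv.swap (pairHi i) (pairHi j)) (pairHi m))
          = ∏ m : Fin l, M (σ (pairLo m)) (σ (pairHi m)) := by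
        rw [hfact _ hlt', hfact _ hlt]
        congr 1
        · exact Finset.prod_congr rfl fun m _ => by rw [PfAux.ev_lo]
        · rw [show (∏ m : Fin l, (f (x ((σ * Equiv.swap (pairHi i) (pairHi j)) (pairHi m))))⁻¹)
              = ∏ m : Fin l, (f (x (σ (pairHi (Equiv.swap i j m)))))⁻¹ from
            Finset.prod_congr rfl fun m _ => by rw [PfAux.ev_hi]]
          exact Equiv.prod_comp (Equiv.swap i j) (fun m => (f (x (σ (pairHi m))))⁻¹)
      rw [hp, hs]
      simp [neg_smul]
    · intro σ ha _
      have hσ := (Finset.mem_filter.1 (Finset.mem_of_mem_erase ha)).2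
      have hne : σ ≠ 1 := Finset.ne_of_mem_erase ha
      obtain ⟨hlt, hmono⟩ := hσ
      obtain ⟨i, j, hij, hik, hjk, hvi, hvj, hHi, hHj⟩ := PfAux.exists_ij hlt hmono hne
      rw [PfAux.gmap_eq hlt hmono hne hvi hvj]
      intro heq
      have h1 : (σ * Equiv.swap (pairHi i) (pairHi j)) (pairHi i) = σ (pairHi i) := by
        rw [heq]
      rw [PfAux.ev_hi, Equiv.swap_apply_left] at h1
      exact hij (PfAux.pairHi_inj (σ.injective h1)).symm
    · intro σ ha
      have hσ := (Finset.mem_filter.1 (Finset.mem_of_mem_erase ha)).2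
      have hne : σ ≠ 1 := Finset.ne_of_mem_erase ha
      obtain ⟨hlt, hmono⟩ := hσ
      obtain ⟨i, j, hij, hik, hjk, hvi, hvj, hHi, hHj⟩ := PfAux.exists_ij hlt hmono hne
      rw [PfAux.gmap_eq hlt hmono hne hvi hvj]
      refine Finset.mem_erase.2 ⟨PfAux.tau_ne_one hlt hmono hne hij hik hjk hvi hvj hHi hHj, ?_⟩
      exact Finset.mem_filter.2 ⟨Finset.mem_univ _,
        PfAux.tau_lt hlt hmono hne hij hik hjk hvi hvj hHi hHj,
        PfAux.tau_mono hlt hmono hne hij hik hjk hvi hvj hHi hHj⟩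
    · intro σ ha
      have hσ := (Finset.mem_filter.1 (Finset.mem_of_mem_erase ha)).2
      have hne : σ ≠ 1 := Finset.ne_of_mem_erase ha
      obtain ⟨hlt, hmono⟩ := hσ
      obtain ⟨i, j, hij, hik, hjk, hvi, hvj, hHi, hHj⟩ := PfAux.exists_ij hlt hmono hne
      exact PfAux.gmap_gmap hlt hmono hne hij hik hjk hvi hvj hHi hHj
  rw [hzero, add_zero]
  simp only [Equiv.Perm.sign_one, Units.val_one, one_smul, Equiv.Perm.coe_one, id_eq]
  exact Finset.prod_congr rfl fun i _ => entry _ _ (pairlt i)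
end

section
/- For vectors u, w ∈ ℝ^{2l}, the antisymmetric matrix B = u wᵀ - w uᵀ has rank at most 2, and consequently for any antisymmetric 2l×2l matrix A, the function ζ ↦ Pf(A + ζB) is an affine (degree ≤ 1) polynomial in ζ. -/
open Finset

namespace PfAux

variable {l : ℕ}

lemma lo_ne_hi {i j : Fin l} : pairLo i ≠ pairHi j := by
  intro h
  have := congrArg Fin.val h
  simp only [pairLo, pairHi] at this
  omega

lemma lo_inj {i j : Fin l} (h : i ≠ j) : pairLo i ≠ pairLo j := by
  intro hh
  have := congrArg Fin.val hh
  simp only [pairLo] at this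
  exact h (Fin.ext (by omega))

lemma hi_inj {i j : Fin l} (h : i ≠ j) : pairHi i ≠ pairHi j := by
  intro hh
  have := congrArg Fin.val hh
  simp only [pairHi] at this
  exact h (Fin.ext (by omega))

/-- The equivalence `Fin 2 × Fin l ≃ Fin (2*l)`, `(c, i) ↦ 2*i + c`. -/
def pairEquiv : Fin 2 × Fin l ≃ Fin (2 * l) where
  toFun p := ⟨2 * p.2.1 + p.1.1, by have := p.1.isLt; have := p.2.isLt; omega⟩
  invFun k := (⟨k.1 % 2, by omega⟩, ⟨k.1 / 2, by have := k.isLt; omega⟩)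
  left_inv p := by
    obtain ⟨⟨c, hc⟩, ⟨i, hi⟩⟩ := p
    refine Prod.ext (Fin.ext ?_) (Fin.ext ?_) <;> · show _ = _; dsimp; omega
  right_inv k := by
    apply Fin.ext
    simp
    omega

lemma pairEquiv_lo (i : Fin l) : pairEquiv (0, i) = pairLo i := by
  apply Fin.ext; simp [pairEquiv, pairLo]

lemma pairEquiv_hi (i : Fin l) : pairEquiv (1, i) = pairHi i := by
  apply Fin.ext; simp [pairEquiv, pairHi]

end PfAux

namespace PfAux2
open PfAux Equiv
variable {l : ℕ}

/-- Permutation of `Fin (2*l)` permuting the pairs according to `π`. -/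
def blockPerm (π : Equiv.Perm (Fin l)) : Equiv.Perm (Fin (2 * l)) :=
  pairEquiv.permCongr (Equiv.prodCongrRight (fun _ : Fin 2 => π))

lemma blockPerm_pairEquiv (π : Equiv.Perm (Fin l)) (c : Fin 2) (i : Fin l) :
    blockPerm π (pairEquiv (c, i)) = pairEquiv (c, π i) := by
  simp [blockPerm, Equiv.permCongr_apply]

lemma blockPerm_lo (π : Equiv.Perm (Fin l)) (i : Fin l) :
    blockPerm π (pairLo i) = pairLo (π i) := by
  rw [← pairEquiv_lo, blockPerm_pairEquiv, pairEquiv_lo]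

lemma blockPerm_hi (π : Equiv.Perm (Fin l)) (i : Fin l) :
    blockPerm π (pairHi i) = pairHi (π i) := by
  rw [← pairEquiv_hi, blockPerm_pairEquiv, pairEquiv_hi]

lemma blockPerm_mul (π ρ : Equiv.Perm (Fin l)) :
    blockPerm π * blockPerm ρ = blockPerm (π * ρ) := by
  ext x
  obtain ⟨p, rfl⟩ := pairEquiv.surjective x
  obtain ⟨c, i⟩ := p
  simp [Equiv.Perm.mul_apply, blockPerm_pairEquiv]

lemma blockPerm_one : blockPerm (1 : Equiv.Perm (Fin l)) = 1 := by
  ext x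
  obtain ⟨p, rfl⟩ := pairEquiv.surjective x
  obtain ⟨c, i⟩ := p
  simp [blockPerm_pairEquiv]

lemma sign_blockPerm (π : Equiv.Perm (Fin l)) : Equiv.Perm.sign (blockPerm π) = 1 := by
  unfold blockPerm
  rw [Equiv.Perm.sign_permCongr, Equiv.Perm.sign_prodCongrRight]
  rw [Finset.prod_const]
  simp

end PfAux2

namespace PfAux3
open PfAux PfAux2 Equiv
variable {l : ℕ}

/-- The summand of the Pfaffian. -/
def trm (X : Matrix (Fin (2 * l)) (Fin (2 * l)) ℝ) (σ : Equiv.Perm (Fin (2 * l))) : ℝ :=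
  (Equiv.Perm.sign σ : ℤ) • ∏ i : Fin l, X (σ (pairLo i)) (σ (pairHi i))

lemma trm_mul_blockPerm (X : Matrix (Fin (2 * l)) (Fin (2 * l)) ℝ)
    (σ : Equiv.Perm (Fin (2 * l))) (π : Equiv.Perm (Fin l)) :
    trm X (σ * blockPerm π) = trm X σ := by
  unfold trm
  rw [map_mul, sign_blockPerm, mul_one]
  congr 1
  calc ∏ i : Fin l, X ((σ * blockPerm π) (pairLo i)) ((σ * blockPerm π) (pairHi i))
      = ∏ i : Fin l, X (σ (pairLo (π i))) (σ (pairHi (π i))) := by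
        refine Finset.prod_congr rfl fun i _ => ?_
        rw [Equiv.Perm.mul_apply, Equiv.Perm.mul_apply, blockPerm_lo, blockPerm_hi]
    _ = ∏ i : Fin l, X (σ (pairLo i)) (σ (pairHi i)) :=
        Equiv.prod_comp π (fun i => X (σ (pairLo i)) (σ (pairHi i)))

lemma trm_mul_swap (X : Matrix (Fin (2 * l)) (Fin (2 * l)) ℝ)
    (hX : Matrix.transpose X = -X) (σ : Equiv.Perm (Fin (2 * l))) (k : Fin l) :
    trm X (σ * Equiv.swap (pairLo k) (pairHi k)) = trm X σ := by
  unfold trm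
  have hs : Equiv.Perm.sign (σ * Equiv.swap (pairLo k) (pairHi k)) = -Equiv.Perm.sign σ := by
    rw [map_mul, Equiv.Perm.sign_swap lo_ne_hi, mul_neg_one]
  rw [hs]
  have hXk : ∀ a b, X a b = - X b a := by
    intro a b
    have := congrFun (congrFun hX b) a
    simpa [Matrix.transpose_apply] using this
  have hprod : ∏ i : Fin l,
      X ((σ * Equiv.swap (pairLo k) (pairHi k)) (pairLo i))
        ((σ * Equiv.swap (pairLo k) (pairHi k)) (pairHi i))
      = - ∏ i : Fin l, X (σ (pairLo i)) (σ (pairHi i)) := by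
    rw [← Finset.mul_prod_erase Finset.univ _ (Finset.mem_univ k),
        ← Finset.mul_prod_erase Finset.univ (fun i => X (σ (pairLo i)) (σ (pairHi i)))
          (Finset.mem_univ k)]
    have h1 : ∀ i ∈ Finset.univ.erase k,
        X ((σ * Equiv.swap (pairLo k) (pairHi k)) (pairLo i))
          ((σ * Equiv.swap (pairLo k) (pairHi k)) (pairHi i))
        = X (σ (pairLo i)) (σ (pairHi i)) := by
      intro i hi
      have hik : i ≠ k := (Finset.mem_erase.mp hi).1
      rw [Equiv.Perm.mul_apply, Equiv.Perm.mul_apply,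
          Equiv.swap_apply_of_ne_of_ne (lo_inj hik) lo_ne_hi,
          Equiv.swap_apply_of_ne_of_ne (Ne.symm lo_ne_hi) (hi_inj hik)]
    rw [Finset.prod_congr rfl h1]
    have h2 : X ((σ * Equiv.swap (pairLo k) (pairHi k)) (pairLo k))
        ((σ * Equiv.swap (pairLo k) (pairHi k)) (pairHi k))
        = - X (σ (pairLo k)) (σ (pairHi k)) := by
      rw [Equiv.Perm.mul_apply, Equiv.Perm.mul_apply, Equiv.swap_apply_left,
          Equiv.swap_apply_right]
      exact hXk _ _
    rw [h2]; ring
  rw [hprod]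
  simp [zsmul_eq_mul]

end PfAux3

namespace PfAux4
open PfAux PfAux2 PfAux3 Equiv
variable {l : ℕ}

/-- Permutations whose first `k` pairs are internally sorted. -/
def Pk (l k : ℕ) : Finset (Equiv.Perm (Fin (2 * l))) :=
  Finset.univ.filter (fun σ => ∀ i : Fin l, (i : ℕ) < k → σ (pairLo i) < σ (pairHi i))

lemma sum_Pk_succ (X : Matrix (Fin (2 * l)) (Fin (2 * l)) ℝ)
    (hX : Matrix.transpose X = -X) (k : ℕ) (hk : k < l) :
    ∑ σ ∈ Pk l k, trm X σ = 2 * ∑ σ ∈ Pk l (k + 1), trm X σ := by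
  classical
  set K : Fin l := ⟨k, hk⟩ with hK
  have e1 : ∀ (σ : Equiv.Perm (Fin (2*l))) (i : Fin l), i ≠ K →
      (σ * Equiv.swap (pairLo K) (pairHi K)) (pairLo i) = σ (pairLo i) := fun σ i hi => by
    rw [Equiv.Perm.mul_apply, Equiv.swap_apply_of_ne_of_ne (lo_inj hi) lo_ne_hi]
  have e2 : ∀ (σ : Equiv.Perm (Fin (2*l))) (i : Fin l), i ≠ K →
      (σ * Equiv.swap (pairLo K) (pairHi K)) (pairHi i) = σ (pairHi i) := fun σ i hi => by
    rw [Equiv.Perm.mul_apply, Equiv.swap_apply_of_ne_of_ne (Ne.symm lo_ne_hi) (hi_inj hi)]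
  have e3 : ∀ (σ : Equiv.Perm (Fin (2*l))),
      (σ * Equiv.swap (pairLo K) (pairHi K)) (pairLo K) = σ (pairHi K) := fun σ => by
    rw [Equiv.Perm.mul_apply, Equiv.swap_apply_left]
  have e4 : ∀ (σ : Equiv.Perm (Fin (2*l))),
      (σ * Equiv.swap (pairLo K) (pairHi K)) (pairHi K) = σ (pairLo K) := fun σ => by
    rw [Equiv.Perm.mul_apply, Equiv.swap_apply_right]
  have hKk : (K : ℕ) = k := rfl
  have hsplit := Finset.sum_filter_add_sum_filter_not (Pk l k)
    (fun σ => σ (pairLo K) < σ (pairHi K)) (trm X)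
  have hgood : (Pk l k).filter (fun σ => σ (pairLo K) < σ (pairHi K)) = Pk l (k + 1) := by
    ext σ
    simp only [Pk, Finset.mem_filter, Finset.mem_univ, true_and]
    constructor
    · rintro ⟨h1, h2⟩ i hi
      rcases Nat.lt_succ_iff_lt_or_eq.mp hi with h | h
      · exact h1 i h
      · have : i = K := Fin.ext (by omega)
        rw [this]; exact h2
    · intro h
      exact ⟨fun i hi => h i (by omega), h K (by omega)⟩
  have hbad : ∑ σ ∈ (Pk l k).filter (fun σ => ¬ σ (pairLo K) < σ (pairHi K)), trm X σ
      = ∑ σ ∈ Pk l (k + 1), trm X σ := by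
    refine Finset.sum_nbij' (fun σ => σ * Equiv.swap (pairLo K) (pairHi K))
      (fun σ => σ * Equiv.swap (pairLo K) (pairHi K)) ?_ ?_ ?_ ?_ ?_
    · intro σ hσ
      simp only [Pk, Finset.mem_filter, Finset.mem_univ, true_and] at hσ ⊢
      obtain ⟨h1, h2⟩ := hσ
      intro i hi
      by_cases hiK : i = K
      · rw [hiK, e3, e4]
        have hne : σ (pairHi K) ≠ σ (pairLo K) := fun h => lo_ne_hi (σ.injective h.symm)
        omega
      · rw [e1 σ i hiK, e2 σ i hiK]
        exact h1 i (by omega)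
    · intro σ hσ
      simp only [Pk, Finset.mem_filter, Finset.mem_univ, true_and] at hσ ⊢
      refine ⟨fun i hi => ?_, ?_⟩
      · have hiK : i ≠ K := fun h => by rw [h, hKk] at hi; omega
        rw [e1 σ i hiK, e2 σ i hiK]
        exact hσ i (by omega)
      · rw [e3, e4]
        have h2 := hσ K (by omega)
        omega
    · intro σ _
      simp only [mul_assoc, Equiv.swap_mul_self, mul_one]
    · intro σ _
      simp only [mul_assoc, Equiv.swap_mul_self, mul_one]
    · intro σ _
      exact (trm_mul_swap X hX σ K).symm
  rw [← hsplit, hgood, hbad]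
  ring

lemma sum_univ_eq_pow_mul (X : Matrix (Fin (2 * l)) (Fin (2 * l)) ℝ)
    (hX : Matrix.transpose X = -X) :
    ∑ σ : Equiv.Perm (Fin (2 * l)), trm X σ = 2 ^ l * ∑ σ ∈ Pk l l, trm X σ := by
  have key : ∀ j : ℕ, j ≤ l →
      ∑ σ ∈ Pk l (l - j), trm X σ = 2 ^ j * ∑ σ ∈ Pk l l, trm X σ := by
    intro j
    induction j with
    | zero => intro _; simp
    | succ m ih =>
      intro hm
      have h1 : l - (m + 1) < l := by omega
      have := sum_Pk_succ X hX (l - (m + 1)) h1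
      rw [show l - (m+1) + 1 = l - m by omega] at this
      rw [this, ih (by omega)]
      ring
  have h0 : Pk l 0 = Finset.univ := by
    apply Finset.filter_true_of_mem
    intro σ _ i hi
    omega
  have := key l (le_refl l)
  rw [Nat.sub_self] at this
  rw [← h0, this]
end PfAux4

namespace PfAux5
open PfAux PfAux2 PfAux3 PfAux4 Equiv
variable {l : ℕ}

/-- Canonical matchings. -/
def canonSet (l : ℕ) : Finset (Equiv.Perm (Fin (2 * l))) :=
  Finset.univ.filter
    (fun σ : Equiv.Perm (Fin (2 * l)) =>
      (∀ i : Fin l, σ (pairLo i) < σ (pairHi i)) ∧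
      ∀ i j : Fin l, i < j → σ (pairLo i) < σ (pairLo j))

lemma sum_Pk_l_eq (X : Matrix (Fin (2 * l)) (Fin (2 * l)) ℝ) :
    ∑ σ ∈ Pk l l, trm X σ = (l.factorial : ℝ) * ∑ σ ∈ canonSet l, trm X σ := by
  classical
  have key : ∑ p ∈ (Finset.univ : Finset (Equiv.Perm (Fin l))) ×ˢ canonSet l,
      trm X p.2 = ∑ σ ∈ Pk l l, trm X σ := by
    refine Finset.sum_nbij' (fun p => p.2 * blockPerm p.1)
      (fun σ => ((Tuple.sort (fun i => σ (pairLo i)))⁻¹,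
        σ * blockPerm (Tuple.sort (fun i => σ (pairLo i))))) ?_ ?_ ?_ ?_ ?_
    · -- forward maps into Pk l l
      rintro ⟨π, σ₀⟩ hp
      simp only [Finset.mem_product, canonSet, Finset.mem_filter, Finset.mem_univ,
        true_and] at hp
      obtain ⟨h1, h2⟩ := hp
      simp only [Pk, Finset.mem_filter, Finset.mem_univ, true_and]
      intro i _
      rw [Equiv.Perm.mul_apply, Equiv.Perm.mul_apply, blockPerm_lo, blockPerm_hi]
      exact h1 (π i)
    · -- backward maps into product
      intro σ hσ
      simp only [Pk, Finset.mem_filter, Finset.mem_univ, true_and] at hσ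
      set m : Fin l → Fin (2 * l) := fun i => σ (pairLo i) with hm
      have hminj : Function.Injective m := fun i j h => by
        by_contra hne
        exact lo_inj hne (σ.injective h)
      have hmono : Monotone (m ∘ Tuple.sort m) := Tuple.monotone_sort m
      have hstrict : StrictMono (m ∘ Tuple.sort m) :=
        hmono.strictMono_of_injective (hminj.comp (Tuple.sort m).injective)
      simp only [Finset.mem_product, canonSet, Finset.mem_filter, Finset.mem_univ, true_and]
      refine ⟨fun i => ?_, fun i j hij => ?_⟩
      · rw [Equiv.Perm.mul_apply, Equiv.Perm.mul_apply, blockPerm_lo, blockPerm_hi]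
        exact hσ (Tuple.sort m i) (by omega)
      · have := hstrict hij
        simpa only [Equiv.Perm.mul_apply, blockPerm_lo, Function.comp] using this
    · -- left inverse
      rintro ⟨π, σ₀⟩ hp
      simp only [Finset.mem_product, canonSet, Finset.mem_filter, Finset.mem_univ,
        true_and] at hp
      obtain ⟨h1, h2⟩ := hp
      have hcaninj : Function.Injective (fun i => σ₀ (pairLo i)) := fun i j h => by
        by_contra hne
        exact lo_inj hne (σ₀.injective h)
      have hcanmono : Monotone (fun i => σ₀ (pairLo i)) := by
        have : StrictMono (fun i => σ₀ (pairLo i)) := fun i j hij => h2 i j hij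
        exact this.monotone
      have hsort : Tuple.sort (fun i => (σ₀ * blockPerm π) (pairLo i)) = π⁻¹ := by
        set f : Fin l → Fin (2 * l) := fun i => (σ₀ * blockPerm π) (pairLo i) with hf
        have hm : f = (fun i => σ₀ (pairLo i)) ∘ π := by
          funext i
          simp only [hf, Equiv.Perm.mul_apply, blockPerm_lo, Function.comp]
        have hfinj : Function.Injective f := by
          rw [hm]
          exact hcaninj.comp π.injective
        have hmono1 : Monotone (f ∘ (Tuple.sort f)) := Tuple.monotone_sort f
        have hmono2 : Monotone (f ∘ ⇑(π⁻¹ : Equiv.Perm (Fin l))) := by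
          have hcomp : f ∘ ⇑(π⁻¹ : Equiv.Perm (Fin l)) = fun i => σ₀ (pairLo i) := by
            funext i
            simp [hm]
          rw [hcomp]
          exact hcanmono
        have huniq := Tuple.unique_monotone hmono2 hmono1
        have heq : (π⁻¹ : Equiv.Perm (Fin l)) = Tuple.sort f := by
          apply Equiv.ext
          intro i
          exact hfinj (congrFun huniq i)
        exact heq.symm
      refine Prod.ext ?_ ?_
      · simp only [hsort, inv_inv]
      · simp only [hsort]
        rw [mul_assoc, blockPerm_mul, mul_inv_cancel, blockPerm_one, mul_one]
    · -- right inverse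
      intro σ hσ
      simp only
      rw [mul_assoc, blockPerm_mul, mul_inv_cancel, blockPerm_one, mul_one]
    · -- terms agree
      rintro ⟨π, σ₀⟩ _
      exact (trm_mul_blockPerm X σ₀ π).symm
  rw [← key, Finset.sum_product]
  simp only []
  rw [Finset.sum_const, nsmul_eq_mul, Finset.card_univ, Fintype.card_perm, Fintype.card_fin]
end PfAux5

namespace PfAux6
open PfAux PfAux2 PfAux3 PfAux4 PfAux5 Equiv
variable {l : ℕ}

/-- real-valued sign -/
def eps (σ : Equiv.Perm (Fin (2 * l))) : ℝ := ((Equiv.Perm.sign σ : ℤ) : ℝ)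

variable (u w : Fin (2 * l) → ℝ) (A : Matrix (Fin (2 * l)) (Fin (2 * l)) ℝ)

def Cf (σ : Equiv.Perm (Fin (2 * l))) (i : Fin l) : ℝ := u (σ (pairLo i)) * w (σ (pairHi i))
def Df (σ : Equiv.Perm (Fin (2 * l))) (i : Fin l) : ℝ := -(w (σ (pairLo i)) * u (σ (pairHi i)))
def Af (σ : Equiv.Perm (Fin (2 * l))) (i : Fin l) : ℝ := A (σ (pairLo i)) (σ (pairHi i))

def EST (S T : Finset (Fin l)) : ℝ :=
  ∑ σ : Equiv.Perm (Fin (2 * l)),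
    eps σ * (((∏ i ∈ T, Cf u w σ i) * ∏ i ∈ S \ T, Df u w σ i) * ∏ i ∈ Finset.univ \ S, Af A σ i)

lemma EST_zero (S T : Finset (Fin l)) (hT : T ⊆ S) (hS : 2 ≤ S.card) :
    EST u w A S T = 0 := by
  classical
  obtain ⟨i, hiS, j, hjS, hij⟩ := Finset.one_lt_card.mp (by omega : 1 < S.card)
  set p : Fin (2 * l) := if i ∈ T then pairLo i else pairHi i with hp
  set q : Fin (2 * l) := if j ∈ T then pairLo j else pairHi j with hq
  have hpcases : p = pairLo i ∨ p = pairHi i := by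
    by_cases h : i ∈ T
    · left; rw [hp, if_pos h]
    · right; rw [hp, if_neg h]
  have hqcases : q = pairLo j ∨ q = pairHi j := by
    by_cases h : j ∈ T
    · left; rw [hq, if_pos h]
    · right; rw [hq, if_neg h]
  have hpq : p ≠ q := by
    rcases hpcases with h1 | h1 <;> rcases hqcases with h2 | h2 <;> rw [h1, h2]
    · exact lo_inj hij
    · exact lo_ne_hi
    · exact Ne.symm lo_ne_hi
    · exact hi_inj hij
  have hlop : ∀ i' : Fin l, i' ≠ i → pairLo i' ≠ p := by
    intro i' h
    rcases hpcases with h1 | h1 <;> rw [h1]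
    · exact lo_inj h
    · exact lo_ne_hi
  have hhip : ∀ i' : Fin l, i' ≠ i → pairHi i' ≠ p := by
    intro i' h
    rcases hpcases with h1 | h1 <;> rw [h1]
    · exact Ne.symm lo_ne_hi
    · exact hi_inj h
  have hloq : ∀ i' : Fin l, i' ≠ j → pairLo i' ≠ q := by
    intro i' h
    rcases hqcases with h1 | h1 <;> rw [h1]
    · exact lo_inj h
    · exact lo_ne_hi
  have hhiq : ∀ i' : Fin l, i' ≠ j → pairHi i' ≠ q := by
    intro i' h
    rcases hqcases with h1 | h1 <;> rw [h1]
    · exact Ne.symm lo_ne_hi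
    · exact hi_inj h
  set τ : Equiv.Perm (Fin (2 * l)) := Equiv.swap p q with hτ
  set F : Equiv.Perm (Fin (2 * l)) → ℝ := fun σ =>
    eps σ * (((∏ i' ∈ T, Cf u w σ i') * ∏ i' ∈ S \ T, Df u w σ i')
      * ∏ i' ∈ Finset.univ \ S, Af A σ i') with hF
  have hneg : ∀ σ : Equiv.Perm (Fin (2 * l)), F (σ * τ) = - F σ := by
    intro σ
    have heps : eps (σ * τ) = - eps σ := by
      unfold eps
      rw [map_mul, hτ, Equiv.Perm.sign_swap hpq]
      push_cast
      ring
    -- untouched slots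
    have huntouched : ∀ x : Fin (2 * l), x ≠ p → x ≠ q → (σ * τ) x = σ x := by
      intro x h1 h2
      rw [Equiv.Perm.mul_apply, hτ, Equiv.swap_apply_of_ne_of_ne h1 h2]
    have hAprod : ∏ i' ∈ Finset.univ \ S, Af A (σ * τ) i'
        = ∏ i' ∈ Finset.univ \ S, Af A σ i' := by
      refine Finset.prod_congr rfl fun i' hi' => ?_
      have hi'S : i' ∉ S := (Finset.mem_sdiff.mp hi').2
      have hi'i : i' ≠ i := fun h => hi'S (h ▸ hiS)
      have hi'j : i' ≠ j := fun h => hi'S (h ▸ hjS)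
      unfold Af
      rw [huntouched _ (hlop i' hi'i) (hloq i' hi'j),
          huntouched _ (hhip i' hi'i) (hhiq i' hi'j)]
    -- the CD product over S
    set H : Equiv.Perm (Fin (2 * l)) → Fin l → ℝ := fun σ' i' =>
      if i' ∈ T then Cf u w σ' i' else Df u w σ' i' with hH
    have hHS : ∀ σ' : Equiv.Perm (Fin (2 * l)),
        (∏ i' ∈ T, Cf u w σ' i') * ∏ i' ∈ S \ T, Df u w σ' i' = ∏ i' ∈ S, H σ' i' := by
      intro σ'
      rw [hH]
      rw [Finset.prod_ite]
      congr 1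
      · apply Finset.prod_congr _ (fun _ _ => rfl)
        rw [Finset.filter_mem_eq_inter, Finset.inter_eq_right.mpr hT]
      · apply Finset.prod_congr _ (fun _ _ => rfl)
        rw [Finset.filter_not, Finset.filter_mem_eq_inter, sdiff_inter_self_left]
    have hjS' : j ∈ S.erase i := Finset.mem_erase.mpr ⟨hij.symm, hjS⟩
    -- evaluations of σ * τ on the four special slots
    have hswp : (σ * τ) p = σ q := by
      rw [Equiv.Perm.mul_apply, hτ, Equiv.swap_apply_left]
    have hswq : (σ * τ) q = σ p := by
      rw [Equiv.Perm.mul_apply, hτ, Equiv.swap_apply_right]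
    have hhead : H (σ * τ) i * H (σ * τ) j = H σ i * H σ j := by
      by_cases hiT : i ∈ T <;> by_cases hjT : j ∈ T
      · have hpv : p = pairLo i := by rw [hp, if_pos hiT]
        have hqv : q = pairLo j := by rw [hq, if_pos hjT]
        simp only [hH, if_pos hiT, if_pos hjT]
        unfold Cf
        rw [← hpv, ← hqv, hswp, hswq,
          huntouched (pairHi i) (hpv ▸ Ne.symm lo_ne_hi) (hqv ▸ Ne.symm lo_ne_hi),
          huntouched (pairHi j) (hpv ▸ Ne.symm lo_ne_hi) (hqv ▸ Ne.symm lo_ne_hi)]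
        ring
      · have hpv : p = pairLo i := by rw [hp, if_pos hiT]
        have hqv : q = pairHi j := by rw [hq, if_neg hjT]
        simp only [hH, if_pos hiT, if_neg hjT]
        unfold Cf Df
        rw [← hpv, ← hqv, hswp, hswq,
          huntouched (pairHi i) (hpv ▸ Ne.symm lo_ne_hi) (hqv ▸ hi_inj hij),
          huntouched (pairLo j) (hpv ▸ lo_inj (Ne.symm hij)) (hqv ▸ lo_ne_hi)]
        ring
      · have hpv : p = pairHi i := by rw [hp, if_neg hiT]
        have hqv : q = pairLo j := by rw [hq, if_pos hjT]
        simp only [hH, if_neg hiT, if_pos hjT]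
        unfold Cf Df
        rw [← hpv, ← hqv, hswp, hswq,
          huntouched (pairLo i) (hpv ▸ lo_ne_hi) (hqv ▸ lo_inj hij),
          huntouched (pairHi j) (hpv ▸ hi_inj (Ne.symm hij)) (hqv ▸ Ne.symm lo_ne_hi)]
        ring
      · have hpv : p = pairHi i := by rw [hp, if_neg hiT]
        have hqv : q = pairHi j := by rw [hq, if_neg hjT]
        simp only [hH, if_neg hiT, if_neg hjT]
        unfold Df
        rw [← hpv, ← hqv, hswp, hswq,
          huntouched (pairLo i) (hpv ▸ lo_ne_hi) (hqv ▸ lo_ne_hi),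
          huntouched (pairLo j) (hpv ▸ lo_ne_hi) (hqv ▸ lo_ne_hi)]
        ring
    have htail : ∏ i' ∈ (S.erase i).erase j, H (σ * τ) i'
        = ∏ i' ∈ (S.erase i).erase j, H σ i' := by
      refine Finset.prod_congr rfl fun i' hi' => ?_
      have hi'j : i' ≠ j := (Finset.mem_erase.mp hi').1
      have hi'i : i' ≠ i := (Finset.mem_erase.mp (Finset.mem_erase.mp hi').2).1
      simp only [hH]
      by_cases h : i' ∈ T
      · simp only [if_pos h]
        unfold Cf
        rw [huntouched _ (hlop i' hi'i) (hloq i' hi'j),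
            huntouched _ (hhip i' hi'i) (hhiq i' hi'j)]
      · simp only [if_neg h]
        unfold Df
        rw [huntouched _ (hlop i' hi'i) (hloq i' hi'j),
            huntouched _ (hhip i' hi'i) (hhiq i' hi'j)]
    have hCD : ∏ i' ∈ S, H (σ * τ) i' = ∏ i' ∈ S, H σ i' := by
      rw [← Finset.mul_prod_erase S (H (σ * τ)) hiS,
          ← Finset.mul_prod_erase (S.erase i) (H (σ * τ)) hjS',
          ← Finset.mul_prod_erase S (H σ) hiS,
          ← Finset.mul_prod_erase (S.erase i) (H σ) hjS', htail]
      calc H (σ * τ) i * (H (σ * τ) j * ∏ i' ∈ (S.erase i).erase j, H σ i')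
          = (H (σ * τ) i * H (σ * τ) j) * ∏ i' ∈ (S.erase i).erase j, H σ i' := by ring
        _ = (H σ i * H σ j) * ∏ i' ∈ (S.erase i).erase j, H σ i' := by rw [hhead]
        _ = H σ i * (H σ j * ∏ i' ∈ (S.erase i).erase j, H σ i') := by ring
    rw [hF]
    simp only
    rw [heps, hAprod, hHS, hHS, hCD]
    ring
  have hsum : ∑ σ : Equiv.Perm (Fin (2 * l)), F (σ * τ)
      = ∑ σ : Equiv.Perm (Fin (2 * l)), F σ :=
    Equiv.sum_comp (Equiv.mulRight τ) F
  have hEST : EST u w A S T = ∑ σ : Equiv.Perm (Fin (2 * l)), F σ := rfl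
  have : ∑ σ : Equiv.Perm (Fin (2 * l)), F σ
      = - ∑ σ : Equiv.Perm (Fin (2 * l)), F σ := by
    calc ∑ σ : Equiv.Perm (Fin (2 * l)), F σ
        = ∑ σ : Equiv.Perm (Fin (2 * l)), F (σ * τ) := hsum.symm
      _ = ∑ σ : Equiv.Perm (Fin (2 * l)), - F σ := by
          refine Finset.sum_congr rfl fun σ _ => hneg σ
      _ = - ∑ σ : Equiv.Perm (Fin (2 * l)), F σ := by rw [Finset.sum_neg_distrib]
  rw [hEST]
  linarith

end PfAux6

namespace PfAux7
open PfAux PfAux2 PfAux3 PfAux4 PfAux5 PfAux6 Equiv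
variable {l : ℕ} (u w : Fin (2 * l) → ℝ) (A : Matrix (Fin (2 * l)) (Fin (2 * l)) ℝ)

def Escr (S : Finset (Fin l)) : ℝ :=
  ∑ σ : Equiv.Perm (Fin (2 * l)),
    eps σ * ((∏ i ∈ S, (Cf u w σ i + Df u w σ i)) * ∏ i ∈ Finset.univ \ S, Af A σ i)

lemma Escr_eq_sum (S : Finset (Fin l)) :
    Escr u w A S = ∑ T ∈ S.powerset, PfAux6.EST u w A S T := by
  unfold Escr PfAux6.EST
  rw [Finset.sum_comm]
  refine Finset.sum_congr rfl fun σ _ => ?_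
  rw [Finset.prod_add, Finset.sum_mul, Finset.mul_sum]

lemma Escr_zero (S : Finset (Fin l)) (hS : 2 ≤ S.card) : Escr u w A S = 0 := by
  rw [Escr_eq_sum]
  refine Finset.sum_eq_zero fun T hT => ?_
  exact PfAux6.EST_zero u w A S T (Finset.mem_powerset.mp hT) hS

lemma g_affine (ζ : ℝ) :
    ∑ σ : Equiv.Perm (Fin (2 * l)),
        trm (A + ζ • (Matrix.vecMulVec u w - Matrix.vecMulVec w u)) σ
      = Escr u w A ∅
        + ζ * ∑ S ∈ (Finset.univ : Finset (Fin l)).powerset.filter (· ≠ ∅), Escr u w A S := by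
  classical
  have hentry : ∀ a b : Fin (2 * l),
      (A + ζ • (Matrix.vecMulVec u w - Matrix.vecMulVec w u)) a b
        = A a b + ζ * (u a * w b + -(w a * u b)) := by
    intro a b
    simp only [Matrix.add_apply, Matrix.smul_apply, Matrix.sub_apply, Matrix.vecMulVec_apply,
      smul_eq_mul]
    ring
  have hterm : ∀ σ : Equiv.Perm (Fin (2 * l)),
      trm (A + ζ • (Matrix.vecMulVec u w - Matrix.vecMulVec w u)) σ
        = ∑ S ∈ (Finset.univ : Finset (Fin l)).powerset,
            ζ ^ S.card * (eps σ * ((∏ i ∈ S, (Cf u w σ i + Df u w σ i))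
              * ∏ i ∈ Finset.univ \ S, Af A σ i)) := by
    intro σ
    unfold trm
    have : ∀ i : Fin l,
        (A + ζ • (Matrix.vecMulVec u w - Matrix.vecMulVec w u)) (σ (pairLo i)) (σ (pairHi i))
          = ζ * (Cf u w σ i + Df u w σ i) + Af A σ i := by
      intro i
      rw [hentry]
      unfold Cf Df Af
      ring
    rw [Finset.prod_congr rfl fun i _ => this i, Finset.prod_add]
    rw [zsmul_eq_mul, Finset.mul_sum]
    refine Finset.sum_congr rfl fun S _ => ?_
    rw [Finset.prod_mul_distrib, Finset.prod_const]
    unfold eps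
    ring
  rw [Finset.sum_congr rfl fun σ _ => hterm σ, Finset.sum_comm]
  have hsplit : ∀ S ∈ (Finset.univ : Finset (Fin l)).powerset,
      (∑ σ : Equiv.Perm (Fin (2 * l)),
        ζ ^ S.card * (eps σ * ((∏ i ∈ S, (Cf u w σ i + Df u w σ i))
          * ∏ i ∈ Finset.univ \ S, Af A σ i)))
        = (if S = ∅ then Escr u w A ∅ else ζ * Escr u w A S) := by
    intro S _
    rw [← Finset.mul_sum]
    by_cases hS : S = ∅
    · rw [if_pos hS, hS]
      simp [Escr]
    · rw [if_neg hS]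
      rcases Nat.lt_or_ge S.card 2 with h2 | h2
      · have h1 : S.card = 1 := by
          have : S.card ≠ 0 := fun h => hS (Finset.card_eq_zero.mp h)
          omega
        rw [h1, pow_one]
        rfl
      · have hE : (∑ σ : Equiv.Perm (Fin (2 * l)),
            eps σ * ((∏ i ∈ S, (Cf u w σ i + Df u w σ i))
              * ∏ i ∈ Finset.univ \ S, Af A σ i)) = Escr u w A S := rfl
        rw [hE, Escr_zero u w A S h2, mul_zero, mul_zero]
  rw [Finset.sum_congr rfl hsplit, Finset.sum_ite]
  have h1 : ((Finset.univ : Finset (Fin l)).powerset.filter (fun S => S = ∅)) = {∅} := by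
    ext S
    simp [Finset.mem_powerset]
  have h2 : ∑ S ∈ ((Finset.univ : Finset (Fin l)).powerset.filter
      (fun S => ¬ S = ∅)), ζ * Escr u w A S
      = ζ * ∑ S ∈ ((Finset.univ : Finset (Fin l)).powerset.filter (· ≠ ∅)), Escr u w A S := by
    rw [Finset.mul_sum]
  rw [h1, h2, Finset.sum_singleton]

end PfAux7

namespace PfFinal
open PfAux PfAux2 PfAux3 PfAux4 PfAux5 PfAux6 PfAux7 Equiv
variable {l : ℕ}

lemma pf_eq_canonSum (X : Matrix (Fin (2 * l)) (Fin (2 * l)) ℝ) :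
    pf X = ∑ σ ∈ canonSet l, trm X σ := rfl

lemma sum_univ_trm (X : Matrix (Fin (2 * l)) (Fin (2 * l)) ℝ)
    (hX : Matrix.transpose X = -X) :
    ∑ σ : Equiv.Perm (Fin (2 * l)), trm X σ
      = ((2 : ℝ) ^ l * (l.factorial : ℝ)) * pf X := by
  rw [sum_univ_eq_pow_mul X hX, sum_Pk_l_eq X, pf_eq_canonSum]
  ring

theorem main (l : ℕ) (u w : Fin (2 * l) → ℝ)
    (A : Matrix (Fin (2 * l)) (Fin (2 * l)) ℝ) (hA : Matrix.transpose A = -A) :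
    (Matrix.vecMulVec u w - Matrix.vecMulVec w u).rank ≤ 2 ∧
    ∃ c d : ℝ, ∀ ζ : ℝ,
      pf (A + ζ • (Matrix.vecMulVec u w - Matrix.vecMulVec w u)) = c + d * ζ := by
  constructor
  · -- rank part
    set P : Matrix (Fin (2 * l)) (Fin 2) ℝ := fun i c => if c = 0 then u i else w i with hP
    set Q : Matrix (Fin 2) (Fin (2 * l)) ℝ := fun c j => if c = 0 then w j else -u j with hQ
    have hfact : Matrix.vecMulVec u w - Matrix.vecMulVec w u = P * Q := by
      ext i j
      rw [Matrix.mul_apply, Fin.sum_univ_two]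
      simp [hP, hQ, Matrix.sub_apply, Matrix.vecMulVec_apply]
      ring
    rw [hfact]
    calc (P * Q).rank ≤ P.rank := Matrix.rank_mul_le_left P Q
      _ ≤ Fintype.card (Fin 2) := Matrix.rank_le_card_width P
      _ = 2 := by simp
  · -- affine part
    set B := Matrix.vecMulVec u w - Matrix.vecMulVec w u with hB
    have hBt : Matrix.transpose B = -B := by
      ext i j
      simp [hB, Matrix.transpose_apply, Matrix.sub_apply, Matrix.vecMulVec_apply]
      ring
    set K : ℝ := (2 : ℝ) ^ l * (l.factorial : ℝ) with hK
    have hKne : K ≠ 0 := by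
      rw [hK]
      positivity
    refine ⟨Escr u w A ∅ / K,
      (∑ S ∈ (Finset.univ : Finset (Fin l)).powerset.filter (· ≠ ∅), Escr u w A S) / K, ?_⟩
    intro ζ
    have hMt : Matrix.transpose (A + ζ • B) = -(A + ζ • B) := by
      rw [Matrix.transpose_add, Matrix.transpose_smul, hA, hBt]
      module
    have h1 := sum_univ_trm (A + ζ • B) hMt
    have h2 := g_affine u w A ζ
    rw [← hB] at h2
    have h3 : K * pf (A + ζ • B)
        = Escr u w A ∅
          + ζ * ∑ S ∈ (Finset.univ : Finset (Fin l)).powerset.filter (· ≠ ∅), Escr u w A S := by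
      rw [← h1, h2]
    have h4 : pf (A + ζ • B)
        = (Escr u w A ∅
          + ζ * ∑ S ∈ (Finset.univ : Finset (Fin l)).powerset.filter (· ≠ ∅), Escr u w A S) / K := by
      rw [eq_div_iff hKne]
      linarith [h3]
    rw [h4]
    ring

end PfFinal


/-- for `u, w ∈ ℝ^{2l}`, the antisymmetric matrix `B = u wᵀ - w uᵀ` has rank
at most `2`, and for any antisymmetric `A` the function `ζ ↦ Pf(A + ζ B)` is affine in `ζ`. -/
theorem rank_le_two_and_pf_affine (l : ℕ) (u w : Fin (2 * l) → ℝ)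
    (A : Matrix (Fin (2 * l)) (Fin (2 * l)) ℝ) (hA : Matrix.transpose A = -A) :
    (Matrix.vecMulVec u w - Matrix.vecMulVec w u).rank ≤ 2 ∧
    ∃ c d : ℝ, ∀ ζ : ℝ,
      pf (A + ζ • (Matrix.vecMulVec u w - Matrix.vecMulVec w u)) = c + d * ζ :=
  PfFinal.main l u w A hA
end

section
/- For a partition μ with μ_1 ≤ n and variables b_1,…,b_n, the sum of weights over all families of n non-intersecting up/right-horizontal lattice paths starting at (0, -(l-1)) for l = 1,…,n and ending at (n-1, μ_l - (l-1)), where each up step at x = j-1 is weighted b_j, equals the Schur polynomial s_μ(b_1,…,b_n). Equivalently (via semistandard tableaux): s_μ(b_1,…,b_n) = Σ over semistandard Young tableaux T of shape μ with entries in {1,…,n} of ∏_j b_j^{(number of j's in T)}. -/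
set_option maxHeartbeats 1000000


open Finset

/-- The complete homogeneous symmetric polynomial `h_k` in `n` variables, evaluated at `x`. -/
def hpoly {R : Type*} [CommRing R] (n k : ℕ) (x : Fin n → R) : R :=
  ∑ d ∈ Finset.Nat.antidiagonalTuple n k, ∏ i, x i ^ d i

/-- `h_k` extended to integer index: zero for negative `k`. -/
def hpolyZ {R : Type*} [CommRing R] (n : ℕ) (k : ℤ) (x : Fin n → R) : R :=
  if 0 ≤ k then hpoly n k.toNat x else 0

/-- The Schur polynomial `s_μ(x_1,…,x_n)` of a partition `μ` with at most `n` parts,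
via the Jacobi–Trudi determinant `det[h_{μ_i - i + j}]_{i,j=1..n}`. -/
def schur {R : Type*} [CommRing R] (n : ℕ) (μ : Fin n → ℕ) (x : Fin n → R) : R :=
  Matrix.det (Matrix.of fun i j : Fin n =>
    hpolyZ n ((μ i : ℤ) - ((i : ℕ) : ℤ) + ((j : ℕ) : ℤ)) x)

namespace JT

/-- entries of a row extended by zero -/
def ext (n : ℕ) (d : Fin n → ℕ) : ℕ → ℕ := fun j => if h : j < n then d ⟨j, h⟩ else 0

/-- partial sums -/
def PS (n : ℕ) (d : Fin n → ℕ) (m : ℕ) : ℕ := ∑ l ∈ Finset.range m, ext n d l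

/-- height of path `i` (data row `d`) after column `m` -/
def H (n : ℕ) (i : Fin n) (d : Fin n → ℕ) (m : ℕ) : ℤ := -(i : ℤ) + PS n d m

variable {n : ℕ}

lemma PS_succ (d : Fin n → ℕ) (m : ℕ) : PS n d (m + 1) = PS n d m + ext n d m := by
  rw [PS, Finset.sum_range_succ]; rfl

lemma PS_mono (d : Fin n → ℕ) {m m' : ℕ} (h : m ≤ m') : PS n d m ≤ PS n d m' :=
  Finset.sum_le_sum_of_subset (Finset.range_subset_range.2 h)

lemma PS_n (d : Fin n → ℕ) : PS n d n = ∑ j, d j := by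
  rw [PS, ← Fin.sum_univ_eq_sum_range (fun l => ext n d l) n]
  exact Finset.sum_congr rfl fun i _ => by simp [ext]

lemma PS_stable (d : Fin n → ℕ) {m : ℕ} (h : n ≤ m) : PS n d m = PS n d n := by
  rw [PS, PS]
  refine (Finset.sum_subset (Finset.range_subset_range.2 h) ?_).symm
  intro l _ hl
  simp only [Finset.mem_range, not_lt] at hl
  rw [ext, dif_neg (by omega)]

lemma H_succ (i : Fin n) (d : Fin n → ℕ) (m : ℕ) :
    H n i d (m + 1) = H n i d m + ext n d m := by
  simp [H, PS_succ]; ring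

lemma H_mono (i : Fin n) (d : Fin n → ℕ) {m m' : ℕ} (h : m ≤ m') :
    H n i d m ≤ H n i d m' := by
  simp only [H]
  have := PS_mono (n := n) d h
  omega

lemma H_zero (i : Fin n) (d : Fin n → ℕ) : H n i d 0 = -(i : ℤ) := by simp [H, PS]

lemma H_n (i : Fin n) (d : Fin n → ℕ) : H n i d n = -(i : ℤ) + ∑ j, d j := by
  rw [H, PS_n]

lemma H_stable (i : Fin n) (d : Fin n → ℕ) {m : ℕ} (h : n ≤ m) : H n i d m = H n i d n := by
  rw [H, H, PS_stable d h]

lemma entry_eq (i : Fin n) (d : Fin n → ℕ) {m : ℕ} (h : m < n) :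
    (d ⟨m, h⟩ : ℤ) = H n i d (m + 1) - H n i d m := by
  rw [H_succ]; simp [ext, h]

lemma entry_eq' (i : Fin n) (d : Fin n → ℕ) (l : Fin n) :
    (d l : ℤ) = H n i d ((l : ℕ) + 1) - H n i d (l : ℕ) := by
  have := entry_eq i d l.2
  simpa using this

/-- path `i` with row data `d` passes through the point `(x, y)` -/
def covers (n : ℕ) (i : Fin n) (d : Fin n → ℕ) (x : ℕ) (y : ℤ) : Prop :=
  H n i d x ≤ y ∧ y ≤ H n i d (x + 1)

instance (i : Fin n) (d : Fin n → ℕ) (x : ℕ) (y : ℤ) : Decidable (covers n i d x y) :=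
  inferInstanceAs (Decidable (_ ∧ _))

/-- swap the tails of rows `i` and `i'` after the point `(x,y)`: new row for `i`. -/
def mix (D : Fin n → Fin n → ℕ) (i i' : Fin n) (x : ℕ) (y : ℤ) : Fin n → ℕ := fun l =>
  if (l : ℕ) < x then D i l
  else if (l : ℕ) = x then (y - H n i (D i) x).toNat + (H n i' (D i') (x + 1) - y).toNat
  else D i' l

lemma mix_lt {D : Fin n → Fin n → ℕ} {i i' : Fin n} {x : ℕ} {y : ℤ} {l : Fin n}
    (h : (l : ℕ) < x) : mix D i i' x y l = D i l := by simp [mix, h]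

lemma mix_eq {D : Fin n → Fin n → ℕ} {i i' : Fin n} {x : ℕ} {y : ℤ} {l : Fin n}
    (h : (l : ℕ) = x) :
    mix D i i' x y l = (y - H n i (D i) x).toNat + (H n i' (D i') (x + 1) - y).toNat := by
  simp [mix, h]

lemma mix_gt {D : Fin n → Fin n → ℕ} {i i' : Fin n} {x : ℕ} {y : ℤ} {l : Fin n}
    (h : x < (l : ℕ)) : mix D i i' x y l = D i' l := by
  have h1 : ¬ ((l:ℕ) < x) := by omega
  have h2 : ¬ ((l:ℕ) = x) := by omega
  simp [mix, h1, h2]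

lemma H_mix_le (D : Fin n → Fin n → ℕ) (i i' : Fin n) (x : ℕ) (y : ℤ) {m : ℕ} (hm : m ≤ x) :
    H n i (mix D i i' x y) m = H n i (D i) m := by
  have hPS : PS n (mix D i i' x y) m = PS n (D i) m := by
    refine Finset.sum_congr rfl fun l hl => ?_
    have hl' : l < x := lt_of_lt_of_le (Finset.mem_range.1 hl) hm
    by_cases h : l < n
    · simp [ext, h, mix, hl']
    · simp [ext, h]
  rw [H, H, hPS]

lemma H_mix_gt (D : Fin n → Fin n → ℕ) (i i' : Fin n) (x : ℕ) (y : ℤ)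
    (hx : x < n) (h1 : H n i (D i) x ≤ y) (h2 : y ≤ H n i' (D i') (x + 1))
    {m : ℕ} (hm : x < m) : H n i (mix D i i' x y) m = H n i' (D i') m := by
  induction m with
  | zero => omega
  | succ m ih =>
    rcases Nat.lt_or_ge x m with hxm | hxm
    · -- step case : m > x
      rw [H_succ, H_succ, ih hxm]
      congr 1
      by_cases h : m < n
      · have h1' : ¬ (m < x) := by omega
        have h2' : ¬ (m = x) := by omega
        simp [ext, h, mix, h1', h2']
      · simp [ext, h]
    · -- base case : m = x
      obtain rfl : x = m := by omega
      rw [H_succ, H_mix_le D i i' x y le_rfl]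
      have hext : ext n (mix D i i' x y) x =
          (y - H n i (D i) x).toNat + (H n i' (D i') (x + 1) - y).toNat := by
        simp [ext, hx, mix]
      rw [hext]
      have e1 : ((y - H n i (D i) x).toNat : ℤ) = y - H n i (D i) x :=
        Int.toNat_of_nonneg (by omega)
      have e2 : (((H n i' (D i') (x + 1) - y)).toNat : ℤ) = H n i' (D i') (x + 1) - y :=
        Int.toNat_of_nonneg (by omega)
      push_cast
      omega

/-- The tail-swapped family of rows. -/
def swapD (D : Fin n → Fin n → ℕ) (i0 i1 : Fin n) (x : ℕ) (y : ℤ) : Fin n → Fin n → ℕ :=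
  Function.update (Function.update D i0 (mix D i0 i1 x y)) i1 (mix D i1 i0 x y)

section Swap

variable {D : Fin n → Fin n → ℕ} {i0 i1 : Fin n} {x : ℕ} {y : ℤ}

lemma swapD_ne {k : Fin n} (h0 : k ≠ i0) (h1 : k ≠ i1) : swapD D i0 i1 x y k = D k := by
  simp [swapD, Function.update_of_ne h1, Function.update_of_ne h0]

lemma swapD_i0 (hne : i0 ≠ i1) : swapD D i0 i1 x y i0 = mix D i0 i1 x y := by
  simp [swapD, Function.update_of_ne hne]

lemma swapD_i1 : swapD D i0 i1 x y i1 = mix D i1 i0 x y := by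
  simp [swapD]

variable (hne : i0 ≠ i1) (hx : x < n)
  (hc0 : covers n i0 (D i0) x y) (hc1 : covers n i1 (D i1) x y)

include hne hx hc0 hc1

lemma H_swap_i0 (m : ℕ) :
    H n i0 (swapD D i0 i1 x y i0) m =
      if m ≤ x then H n i0 (D i0) m else H n i1 (D i1) m := by
  rw [swapD_i0 hne]
  split
  · exact H_mix_le D i0 i1 x y ‹_›
  · exact H_mix_gt D i0 i1 x y hx hc0.1 hc1.2 (by omega)

lemma H_swap_i1 (m : ℕ) :
    H n i1 (swapD D i0 i1 x y i1) m =
      if m ≤ x then H n i1 (D i1) m else H n i0 (D i0) m := by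
  rw [swapD_i1]
  split
  · exact H_mix_le D i1 i0 x y ‹_›
  · exact H_mix_gt D i1 i0 x y hx hc1.1 hc0.2 (by omega)

lemma covers_swap (k : Fin n) (u : ℕ) (v : ℤ) (hq : u < x ∨ (u = x ∧ v ≤ y)) :
    covers n k (swapD D i0 i1 x y k) u v ↔ covers n k (D k) u v := by
  rcases eq_or_ne k i0 with hk0 | hk0
  · rw [hk0]
    rcases hq with hu | ⟨rfl, hv⟩
    · unfold covers
      rw [H_swap_i0 hne hx hc0 hc1, H_swap_i0 hne hx hc0 hc1,
        if_pos (by omega : u ≤ x), if_pos (by omega : u + 1 ≤ x)]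
    · unfold covers
      rw [H_swap_i0 hne hx hc0 hc1, H_swap_i0 hne hx hc0 hc1,
        if_pos le_rfl, if_neg (by omega)]
      constructor
      · rintro ⟨h1, _⟩; exact ⟨h1, le_trans hv hc0.2⟩
      · rintro ⟨h1, _⟩; exact ⟨h1, le_trans hv hc1.2⟩
  rcases eq_or_ne k i1 with hk1 | hk1
  · rw [hk1]
    rcases hq with hu | ⟨rfl, hv⟩
    · unfold covers
      rw [H_swap_i1 hne hx hc0 hc1, H_swap_i1 hne hx hc0 hc1,
        if_pos (by omega : u ≤ x), if_pos (by omega : u + 1 ≤ x)]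
    · unfold covers
      rw [H_swap_i1 hne hx hc0 hc1, H_swap_i1 hne hx hc0 hc1,
        if_pos le_rfl, if_neg (by omega)]
      constructor
      · rintro ⟨h1, _⟩; exact ⟨h1, le_trans hv hc1.2⟩
      · rintro ⟨h1, _⟩; exact ⟨h1, le_trans hv hc0.2⟩
  · rw [swapD_ne hk0 hk1]

lemma col_sum_swap (j : Fin n) :
    swapD D i0 i1 x y i0 j + swapD D i0 i1 x y i1 j = D i0 j + D i1 j := by
  rw [swapD_i0 hne, swapD_i1]
  rcases Nat.lt_trichotomy (j : ℕ) x with hj | hj | hj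
  · rw [mix_lt hj, mix_lt hj]
  · rw [mix_eq hj, mix_eq hj]
    have hx' : (j : ℕ) < n := j.2
    have e0 := entry_eq' i0 (D i0) j
    have e1 := entry_eq' i1 (D i1) j
    rw [hj] at e0 e1
    have a1 : ((y - H n i0 (D i0) x).toNat : ℤ) = y - H n i0 (D i0) x :=
      Int.toNat_of_nonneg (by have := hc0.1; omega)
    have a2 : ((H n i1 (D i1) (x+1) - y).toNat : ℤ) = H n i1 (D i1) (x+1) - y :=
      Int.toNat_of_nonneg (by have := hc1.2; omega)
    have a3 : ((y - H n i1 (D i1) x).toNat : ℤ) = y - H n i1 (D i1) x :=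
      Int.toNat_of_nonneg (by have := hc1.1; omega)
    have a4 : ((H n i0 (D i0) (x+1) - y).toNat : ℤ) = H n i0 (D i0) (x+1) - y :=
      Int.toNat_of_nonneg (by have := hc0.2; omega)
    omega
  · rw [mix_gt hj, mix_gt hj]; omega

lemma covers_swap_pt_i0 : covers n i0 (swapD D i0 i1 x y i0) x y :=
  (covers_swap hne hx hc0 hc1 i0 x y (Or.inr ⟨rfl, le_rfl⟩)).2 hc0

lemma covers_swap_pt_i1 : covers n i1 (swapD D i0 i1 x y i1) x y :=
  (covers_swap hne hx hc0 hc1 i1 x y (Or.inr ⟨rfl, le_rfl⟩)).2 hc1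

lemma swap_swap : swapD (swapD D i0 i1 x y) i0 i1 x y = D := by
  funext k
  rcases eq_or_ne k i0 with hk0 | hk0
  · rw [hk0, swapD_i0 hne]
    funext l
    rcases Nat.lt_trichotomy (l : ℕ) x with hl | hl | hl
    · rw [mix_lt hl, swapD_i0 hne, mix_lt hl]
    · rw [mix_eq hl]
      rw [show H n i0 (swapD D i0 i1 x y i0) x = H n i0 (D i0) x from by
            rw [H_swap_i0 hne hx hc0 hc1]; simp,
          show H n i1 (swapD D i0 i1 x y i1) (x+1) = H n i0 (D i0) (x+1) from by
            rw [H_swap_i1 hne hx hc0 hc1]; simp]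
      have hx' : (l : ℕ) < n := l.2
      have e0 := entry_eq' i0 (D i0) l
      rw [hl] at e0
      have a1 : ((y - H n i0 (D i0) x).toNat : ℤ) = y - H n i0 (D i0) x :=
        Int.toNat_of_nonneg (by have := hc0.1; omega)
      have a4 : ((H n i0 (D i0) (x+1) - y).toNat : ℤ) = H n i0 (D i0) (x+1) - y :=
        Int.toNat_of_nonneg (by have := hc0.2; omega)
      omega
    · rw [mix_gt hl, swapD_i1, mix_gt hl]
  rcases eq_or_ne k i1 with hk1 | hk1
  · rw [hk1, swapD_i1]
    funext l
    rcases Nat.lt_trichotomy (l : ℕ) x with hl | hl | hl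
    · rw [mix_lt hl, swapD_i1, mix_lt hl]
    · rw [mix_eq hl]
      rw [show H n i1 (swapD D i0 i1 x y i1) x = H n i1 (D i1) x from by
            rw [H_swap_i1 hne hx hc0 hc1]; simp,
          show H n i0 (swapD D i0 i1 x y i0) (x+1) = H n i1 (D i1) (x+1) from by
            rw [H_swap_i0 hne hx hc0 hc1]; simp]
      have hx' : (l : ℕ) < n := l.2
      have e0 := entry_eq' i1 (D i1) l
      rw [hl] at e0
      have a1 : ((y - H n i1 (D i1) x).toNat : ℤ) = y - H n i1 (D i1) x :=
        Int.toNat_of_nonneg (by have := hc1.1; omega)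
      have a4 : ((H n i1 (D i1) (x+1) - y).toNat : ℤ) = H n i1 (D i1) (x+1) - y :=
        Int.toNat_of_nonneg (by have := hc1.2; omega)
      omega
    · rw [mix_gt hl, swapD_i0 hne, mix_gt hl]
  · rw [swapD_ne hk0 hk1, swapD_ne hk0 hk1]

lemma sum_swap_i0 : (∑ j, swapD D i0 i1 x y i0 j : ℤ) = (∑ j, D i1 j : ℤ) - (i1 : ℤ) + i0 := by
  have h1 : H n i0 (swapD D i0 i1 x y i0) n = H n i1 (D i1) n := by
    rw [H_swap_i0 hne hx hc0 hc1, if_neg (by omega)]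
  rw [H_n, H_n] at h1
  push_cast at h1 ⊢
  omega

lemma sum_swap_i1 : (∑ j, swapD D i0 i1 x y i1 j : ℤ) = (∑ j, D i0 j : ℤ) - (i0 : ℤ) + i1 := by
  have h1 : H n i1 (swapD D i0 i1 x y i1) n = H n i0 (D i0) n := by
    rw [H_swap_i1 hne hx hc0 hc1, if_neg (by omega)]
  rw [H_n, H_n] at h1
  push_cast at h1 ⊢
  omega

end Swap

section Ipts

open scoped Classical

/-- bounding box for intersection points -/
noncomputable def box (n : ℕ) : Finset (ℕ ×ₗ ℤ) :=
  (Finset.range n ×ˢ Finset.Icc (-(n : ℤ)) (n : ℤ)).map toLex.toEmbedding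

/-- the set of (boxed) intersection points of the path family `D` -/
noncomputable def ipts (n : ℕ) (D : Fin n → Fin n → ℕ) : Finset (ℕ ×ₗ ℤ) :=
  (box n).filter fun q => ∃ i i' : Fin n, i ≠ i' ∧
    covers n i (D i) (ofLex q).1 (ofLex q).2 ∧ covers n i' (D i') (ofLex q).1 (ofLex q).2

lemma min'_congr {α : Type*} [LinearOrder α] {s t : Finset α} (h : s = t)
    (hs : s.Nonempty) (ht : t.Nonempty) : s.min' hs = t.min' ht := by subst h; rfl

lemma mem_box {u : ℕ} {v : ℤ} :
    toLex (u, v) ∈ box n ↔ u < n ∧ -(n : ℤ) ≤ v ∧ v ≤ n := by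
  rw [box, Finset.mem_map_equiv]
  simp [and_assoc]

lemma mem_ipts {q : ℕ ×ₗ ℤ} {D : Fin n → Fin n → ℕ} :
    q ∈ ipts n D ↔ (toLex ((ofLex q).1, (ofLex q).2) ∈ box n) ∧ ∃ i i' : Fin n, i ≠ i' ∧
      covers n i (D i) (ofLex q).1 (ofLex q).2 ∧ covers n i' (D i') (ofLex q).1 (ofLex q).2 := by
  rw [ipts, Finset.mem_filter]
  constructor
  · rintro ⟨h1, h2⟩; exact ⟨h1, h2⟩
  · rintro ⟨h1, h2⟩; exact ⟨h1, h2⟩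

/-- the set of paths through a given point -/
def covSet (n : ℕ) (D : Fin n → Fin n → ℕ) (u : ℕ) (v : ℤ) : Finset (Fin n) :=
  Finset.univ.filter fun i => covers n i (D i) u v

section Choice

variable (D : Fin n → Fin n → ℕ) (hp : (ipts n D).Nonempty)

/-- the lexicographically smallest intersection point -/
noncomputable def thePt : ℕ ×ₗ ℤ := (ipts n D).min' hp

noncomputable def pX : ℕ := (ofLex (thePt D hp)).1
noncomputable def pY : ℤ := (ofLex (thePt D hp)).2

lemma thePt_mem : thePt D hp ∈ ipts n D := (ipts n D).min'_mem hp

lemma pX_lt : pX D hp < n := by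
  have := thePt_mem D hp
  rw [mem_ipts] at this
  exact (mem_box.1 this.1).1

lemma covSet_card : 1 < (covSet n D (pX D hp) (pY D hp)).card := by
  have := thePt_mem D hp
  rw [mem_ipts] at this
  obtain ⟨-, i, i', hne, h1, h2⟩ := this
  rw [Finset.one_lt_card]
  exact ⟨i, by rw [covSet, Finset.mem_filter]; exact ⟨Finset.mem_univ _, h1⟩, i', by rw [covSet, Finset.mem_filter]; exact ⟨Finset.mem_univ _, h2⟩, hne⟩

/-- the two lowest-index paths through the first intersection point -/
noncomputable def I0 : Fin n :=
  (covSet n D (pX D hp) (pY D hp)).min' (Finset.card_pos.1 (by have := covSet_card D hp; omega))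

lemma I0_mem : I0 D hp ∈ covSet n D (pX D hp) (pY D hp) := Finset.min'_mem _ _

lemma covSet_erase_nonempty : ((covSet n D (pX D hp) (pY D hp)).erase (I0 D hp)).Nonempty := by
  rw [← Finset.card_pos, Finset.card_erase_of_mem (I0_mem D hp)]
  have := covSet_card D hp; omega

noncomputable def I1 : Fin n :=
  ((covSet n D (pX D hp) (pY D hp)).erase (I0 D hp)).min' (covSet_erase_nonempty D hp)

lemma I1_mem' : I1 D hp ∈ (covSet n D (pX D hp) (pY D hp)).erase (I0 D hp) :=
  Finset.min'_mem _ _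

lemma I1_mem : I1 D hp ∈ covSet n D (pX D hp) (pY D hp) :=
  Finset.mem_of_mem_erase (I1_mem' D hp)

lemma I0_ne_I1 : I0 D hp ≠ I1 D hp := (Finset.ne_of_mem_erase (I1_mem' D hp)).symm

lemma I0_covers : covers n (I0 D hp) (D (I0 D hp)) (pX D hp) (pY D hp) := by
  have := I0_mem D hp; rw [covSet, Finset.mem_filter] at this; exact this.2

lemma I1_covers : covers n (I1 D hp) (D (I1 D hp)) (pX D hp) (pY D hp) := by
  have := I1_mem D hp; rw [covSet, Finset.mem_filter] at this; exact this.2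

/-- The tail-swapped configuration at the canonical choice. -/
noncomputable def swapAt : Fin n → Fin n → ℕ :=
  swapD D (I0 D hp) (I1 D hp) (pX D hp) (pY D hp)

lemma thePt_mem_swapAt : thePt D hp ∈ ipts n (swapAt D hp) := by
  have hmem := thePt_mem D hp
  rw [mem_ipts] at hmem ⊢
  refine ⟨hmem.1, I0 D hp, I1 D hp, I0_ne_I1 D hp, ?_, ?_⟩
  · exact (covers_swap (I0_ne_I1 D hp) (pX_lt D hp) (I0_covers D hp) (I1_covers D hp)
      (I0 D hp) _ _ (Or.inr ⟨rfl, le_rfl⟩)).2 (I0_covers D hp)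
  · exact (covers_swap (I0_ne_I1 D hp) (pX_lt D hp) (I0_covers D hp) (I1_covers D hp)
      (I1 D hp) _ _ (Or.inr ⟨rfl, le_rfl⟩)).2 (I1_covers D hp)

lemma swapAt_nonempty : (ipts n (swapAt D hp)).Nonempty := ⟨_, thePt_mem_swapAt D hp⟩

lemma thePt_swapAt : thePt (swapAt D hp) (swapAt_nonempty D hp) = thePt D hp := by
  apply le_antisymm
  · exact Finset.min'_le _ _ (thePt_mem_swapAt D hp)
  · -- every intersection point of the swapped family is ≥ thePt
    apply Finset.le_min'
    intro q hq
    by_contra hlt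
    push_neg at hlt
    -- q < thePt; write q as a pair
    have hq' : q ∈ ipts n D := by
      rw [mem_ipts] at hq ⊢
      obtain ⟨hbox, i, i', hne', h1, h2⟩ := hq
      have hcond : (ofLex q).1 < pX D hp ∨
          ((ofLex q).1 = pX D hp ∧ (ofLex q).2 ≤ pY D hp) := by
        have : toLex (ofLex q) < toLex (ofLex (thePt D hp)) := by
          simpa using hlt
        rw [Prod.Lex.lt_iff] at this
        rcases this with h | ⟨h1', h2'⟩
        · exact Or.inl h
        · exact Or.inr ⟨h1', le_of_lt h2'⟩
      refine ⟨hbox, i, i', hne', ?_, ?_⟩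
      · exact (covers_swap (I0_ne_I1 D hp) (pX_lt D hp) (I0_covers D hp) (I1_covers D hp)
          i _ _ hcond).1 h1
      · exact (covers_swap (I0_ne_I1 D hp) (pX_lt D hp) (I0_covers D hp) (I1_covers D hp)
          i' _ _ hcond).1 h2
    exact absurd (Finset.min'_le _ _ hq') (not_le.2 hlt)

lemma covSet_swapAt :
    covSet n (swapAt D hp) (pX D hp) (pY D hp) = covSet n D (pX D hp) (pY D hp) := by
  ext k
  simp only [covSet, Finset.mem_filter, Finset.mem_univ, true_and]
  exact covers_swap (I0_ne_I1 D hp) (pX_lt D hp) (I0_covers D hp) (I1_covers D hp)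
    k _ _ (Or.inr ⟨rfl, le_rfl⟩)

lemma pX_swapAt : pX (swapAt D hp) (swapAt_nonempty D hp) = pX D hp := by
  rw [pX, pX, thePt_swapAt]

lemma pY_swapAt : pY (swapAt D hp) (swapAt_nonempty D hp) = pY D hp := by
  rw [pY, pY, thePt_swapAt]

lemma I0_swapAt : I0 (swapAt D hp) (swapAt_nonempty D hp) = I0 D hp := by
  rw [I0, I0]
  exact min'_congr (by rw [pX_swapAt, pY_swapAt, covSet_swapAt]) _ _

lemma I1_swapAt : I1 (swapAt D hp) (swapAt_nonempty D hp) = I1 D hp := by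
  rw [I1, I1]
  exact min'_congr (by rw [pX_swapAt, pY_swapAt, covSet_swapAt, I0_swapAt]) _ _

lemma swapAt_swapAt : swapAt (swapAt D hp) (swapAt_nonempty D hp) = D := by
  rw [swapAt, pX_swapAt, pY_swapAt, I0_swapAt, I1_swapAt]
  exact swap_swap (I0_ne_I1 D hp) (pX_lt D hp) (I0_covers D hp) (I1_covers D hp)

end Choice

end Ipts

section Separation

variable {n : ℕ}

/-- all paths strictly ordered: the good (non-intersecting) configurations -/
def Good (n : ℕ) (D : Fin n → Fin n → ℕ) : Prop :=
  ∀ i i' : Fin n, (i : ℕ) < (i' : ℕ) → ∀ u < n, H n i' (D i') (u + 1) < H n i (D i) u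

lemma disjoint_cols {D : Fin n → Fin n → ℕ} {i i' : Fin n}
    (hni : ∀ u < n, ∀ v : ℤ, ¬(covers n i (D i) u v ∧ covers n i' (D i') u v))
    {u : ℕ} (hu : u < n) :
    H n i (D i) (u + 1) < H n i' (D i') u ∨ H n i' (D i') (u + 1) < H n i (D i) u := by
  by_contra hcon
  push_neg at hcon
  obtain ⟨h1, h2⟩ := hcon
  refine hni u hu (max (H n i (D i) u) (H n i' (D i') u)) ⟨⟨le_max_left _ _, ?_⟩,
    ⟨le_max_right _ _, ?_⟩⟩
  · exact max_le (H_mono i (D i) (Nat.le_succ u)) h1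
  · exact max_le h2 (H_mono i' (D i') (Nat.le_succ u))

lemma separation {D : Fin n → Fin n → ℕ} {i i' : Fin n} (hlt : (i : ℕ) < (i' : ℕ))
    (hni : ∀ u < n, ∀ v : ℤ, ¬(covers n i (D i) u v ∧ covers n i' (D i') u v)) :
    ∀ u < n, H n i' (D i') (u + 1) < H n i (D i) u := by
  intro u
  induction u with
  | zero =>
    intro hu
    rcases disjoint_cols hni hu with h | h
    · exfalso
      have h0 : H n i' (D i') 0 < H n i (D i) 0 := by
        rw [H_zero, H_zero]; omega
      have h3 := H_mono i (D i) (Nat.zero_le 1)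
      have h4 : (0:ℕ) + 1 = 1 := rfl
      rw [h4] at h
      omega
    · exact h
  | succ u ih =>
    intro hu
    have ihu := ih (by omega)
    rcases disjoint_cols hni hu with h | h
    · exfalso
      have h1 := H_mono i (D i) (by omega : u + 1 ≤ u + 1 + 1)
      have h3 := H_mono i (D i) (by omega : u ≤ u + 1)
      omega
    · exact h

lemma good_no_int {D : Fin n → Fin n → ℕ} (hg : Good n D) : ipts n D = ∅ := by
  rw [Finset.eq_empty_iff_forall_notMem]
  intro q hq
  rw [mem_ipts] at hq
  obtain ⟨hbox, i, i', hne, h1, h2⟩ := hq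
  have hu : (ofLex q).1 < n := (mem_box.1 hbox).1
  rcases Ne.lt_or_gt (fun h : (i : ℕ) = (i' : ℕ) => hne (Fin.ext h)) with hlt | hlt
  · have := hg i i' hlt _ hu
    have := h2.2; have := h1.1; omega
  · have := hg i' i hlt _ hu
    have := h1.2; have := h2.1; omega

end Separation

section Config

open Equiv

variable {n : ℕ}

/-- the (integer) index of the `h` polynomial in row `i` of the permuted determinant -/
def kZ (μ : Fin n → ℕ) (σ : Equiv.Perm (Fin n)) (i : Fin n) : ℤ :=
  (μ (σ i) : ℤ) - ((σ i : ℕ) : ℤ) + ((i : ℕ) : ℤ)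

/-- possible rows for index `i`, permutation `σ` -/
def dset (μ : Fin n → ℕ) (σ : Equiv.Perm (Fin n)) (i : Fin n) : Finset (Fin n → ℕ) :=
  if 0 ≤ kZ μ σ i then Finset.Nat.antidiagonalTuple n (kZ μ σ i).toNat else ∅

lemma mem_dset {μ : Fin n → ℕ} {σ : Equiv.Perm (Fin n)} {i : Fin n} {d : Fin n → ℕ} :
    d ∈ dset μ σ i ↔ (∑ j, d j : ℤ) = kZ μ σ i := by
  rw [dset]
  split
  case isTrue h =>
    rw [Finset.Nat.mem_antidiagonalTuple]
    have := Int.toNat_of_nonneg h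
    have hc : ((∑ j, d j : ℕ) : ℤ) = ∑ j, (d j : ℤ) := by push_cast; rfl
    constructor
    · intro hh; omega
    · intro hh; omega
  case isFalse h =>
    simp only [Finset.notMem_empty, false_iff]
    intro hh
    have : (0 : ℤ) ≤ ∑ j, (d j : ℤ) := Finset.sum_nonneg fun j _ => Int.natCast_nonneg _
    push_cast at hh
    omega

/-- the index set of the expanded determinant: a permutation together with a path family -/
noncomputable def big (μ : Fin n → ℕ) : Finset (Σ _ : Equiv.Perm (Fin n), (Fin n → Fin n → ℕ)) :=
  Finset.univ.sigma fun σ => Fintype.piFinset (dset μ σ)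

lemma mem_big {μ : Fin n → ℕ} {c : Σ _ : Equiv.Perm (Fin n), (Fin n → Fin n → ℕ)} :
    c ∈ big μ ↔ ∀ i, (∑ j, c.2 i j : ℤ) = kZ μ c.1 i := by
  obtain ⟨σ, D⟩ := c
  simp [big, Fintype.mem_piFinset, mem_dset]

/-- the monomial weight of a path family -/
def wt (b : Fin n → ℝ) (D : Fin n → Fin n → ℕ) : ℝ := ∏ i, ∏ j, b j ^ D i j

def sgn (σ : Equiv.Perm (Fin n)) : ℝ := ((Equiv.Perm.sign σ : ℤ) : ℝ)

lemma hpolyZ_eq (k : ℤ) (b : Fin n → ℝ) :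
    hpolyZ n k b = ∑ d ∈ (if 0 ≤ k then Finset.Nat.antidiagonalTuple n k.toNat else ∅),
      ∏ j, b j ^ d j := by
  rw [hpolyZ]
  split
  · rfl
  · simp

lemma schur_eq_big (μ : Fin n → ℕ) (b : Fin n → ℝ) :
    schur n μ b = ∑ c ∈ big μ, sgn c.1 * wt b c.2 := by
  rw [schur, Matrix.det_apply, big]
  rw [Finset.sum_sigma (Finset.univ) (fun σ => Fintype.piFinset (dset μ σ))
    (fun c => sgn c.1 * wt b c.2)]
  refine Finset.sum_congr rfl fun σ _ => ?_
  have h1 : ∀ i : Fin n, (Matrix.of fun i j : Fin n =>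
      hpolyZ n ((μ i : ℤ) - ((i : ℕ) : ℤ) + ((j : ℕ) : ℤ)) b) (σ i) i =
      ∑ d ∈ dset μ σ i, ∏ j, b j ^ d j := fun i => hpolyZ_eq _ b
  calc Equiv.Perm.sign σ • ∏ i, (Matrix.of fun i j : Fin n =>
      hpolyZ n ((μ i : ℤ) - ((i : ℕ) : ℤ) + ((j : ℕ) : ℤ)) b) (σ i) i
      = sgn σ * ∏ i, ∑ d ∈ dset μ σ i, ∏ j, b j ^ d j := by
        rw [Finset.prod_congr rfl fun i _ => h1 i]
        rw [Units.smul_def, zsmul_eq_mul, sgn]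
    _ = sgn σ * ∑ D ∈ Fintype.piFinset (dset μ σ), ∏ i, ∏ j, b j ^ D i j := by
        rw [Finset.prod_univ_sum]
    _ = ∑ D ∈ Fintype.piFinset (dset μ σ), sgn σ * wt b D := by
        rw [Finset.mul_sum]; rfl

section SwapSum

variable {D : Fin n → Fin n → ℕ} {i0 i1 : Fin n} {x : ℕ} {y : ℤ}
variable (hne : i0 ≠ i1) (hx : x < n)
  (hc0 : covers n i0 (D i0) x y) (hc1 : covers n i1 (D i1) x y)

include hne hx hc0 hc1

lemma sum_col_swapD (j : Fin n) : ∑ i, swapD D i0 i1 x y i j = ∑ i, D i j := by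
  classical
  have e : ∀ i : Fin n, swapD D i0 i1 x y i j =
      Function.update (Function.update (fun i => D i j) i0 (mix D i0 i1 x y j)) i1
        (mix D i1 i0 x y j) i := by
    intro i
    rcases eq_or_ne i i1 with rfl | h1
    · rw [swapD_i1, Function.update_self]
    rcases eq_or_ne i i0 with rfl | h0
    · rw [swapD_i0 hne, Function.update_of_ne h1, Function.update_self]
    · rw [swapD_ne h0 h1, Function.update_of_ne h1, Function.update_of_ne h0]
  have e2 : ∀ i : Fin n, D i j =
      Function.update (Function.update (fun i => D i j) i0 (D i0 j)) i1 (D i1 j) i := by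
    intro i
    rcases eq_or_ne i i1 with rfl | h1
    · rw [Function.update_self]
    rcases eq_or_ne i i0 with rfl | h0
    · rw [Function.update_of_ne h1, Function.update_self]
    · rw [Function.update_of_ne h1, Function.update_of_ne h0]
  rw [Finset.sum_congr rfl fun i _ => e i, Finset.sum_congr rfl fun i _ => e2 i]
  rw [Finset.sum_update_of_mem (Finset.mem_univ i1),
      Finset.sum_update_of_mem (Finset.mem_univ i1)]
  have hi0 : i0 ∈ Finset.univ \ {i1} := by simp [hne]
  rw [Finset.sum_update_of_mem hi0, Finset.sum_update_of_mem hi0]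
  have := col_sum_swap hne hx hc0 hc1 j
  rw [swapD_i0 hne, swapD_i1] at this
  omega

lemma wt_swapD (b : Fin n → ℝ) : wt b (swapD D i0 i1 x y) = wt b D := by
  rw [wt, wt, Finset.prod_comm, Finset.prod_comm (f := fun i j => b j ^ D i j)]
  refine Finset.prod_congr rfl fun j _ => ?_
  rw [Finset.prod_pow_eq_pow_sum, Finset.prod_pow_eq_pow_sum,
    sum_col_swapD hne hx hc0 hc1 j]

end SwapSum

end Config

section Involution

open scoped Classical

variable {n : ℕ}

lemma I0_swapAt' (D : Fin n → Fin n → ℕ) (hp : (ipts n D).Nonempty)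
    (h' : (ipts n (swapAt D hp)).Nonempty) : I0 (swapAt D hp) h' = I0 D hp :=
  I0_swapAt D hp

lemma I1_swapAt' (D : Fin n → Fin n → ℕ) (hp : (ipts n D).Nonempty)
    (h' : (ipts n (swapAt D hp)).Nonempty) : I1 (swapAt D hp) h' = I1 D hp :=
  I1_swapAt D hp

lemma swapAt_swapAt' (D : Fin n → Fin n → ℕ) (hp : (ipts n D).Nonempty)
    (h' : (ipts n (swapAt D hp)).Nonempty) : swapAt (swapAt D hp) h' = D :=
  swapAt_swapAt D hp

/-- the tail-swap involution on configurations -/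
noncomputable def Phi (c : Σ _ : Equiv.Perm (Fin n), (Fin n → Fin n → ℕ)) :
    Σ _ : Equiv.Perm (Fin n), (Fin n → Fin n → ℕ) :=
  if hp : (ipts n c.2).Nonempty then
    ⟨c.1 * Equiv.swap (I0 c.2 hp) (I1 c.2 hp), swapAt c.2 hp⟩
  else c

lemma Phi_spec (c : Σ _ : Equiv.Perm (Fin n), (Fin n → Fin n → ℕ))
    (hp : (ipts n c.2).Nonempty) :
    Phi c = ⟨c.1 * Equiv.swap (I0 c.2 hp) (I1 c.2 hp), swapAt c.2 hp⟩ := by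
  unfold Phi
  exact dif_pos hp

lemma Phi_invol (c : Σ _ : Equiv.Perm (Fin n), (Fin n → Fin n → ℕ))
    (hp : (ipts n c.2).Nonempty) : Phi (Phi c) = c := by
  obtain ⟨σ, D⟩ := c
  rw [Phi_spec ⟨σ, D⟩ hp]
  rw [Phi_spec _ (show (ipts n ((⟨σ * Equiv.swap (I0 D hp) (I1 D hp), swapAt D hp⟩ :
      Σ _ : Equiv.Perm (Fin n), (Fin n → Fin n → ℕ))).2).Nonempty from swapAt_nonempty D hp)]
  dsimp only
  rw [I0_swapAt' D hp, I1_swapAt' D hp, swapAt_swapAt' D hp, mul_assoc,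
    Equiv.swap_mul_self, mul_one]

lemma sgn_mul_swap (σ : Equiv.Perm (Fin n)) {a b : Fin n} (hab : a ≠ b) :
    sgn (σ * Equiv.swap a b) = - sgn σ := by
  simp [sgn, Equiv.Perm.sign_mul, Equiv.Perm.sign_swap hab]

lemma wt_swapAt (b : Fin n → ℝ) (D : Fin n → Fin n → ℕ) (hp : (ipts n D).Nonempty) :
    wt b (swapAt D hp) = wt b D := by
  rw [swapAt]
  exact wt_swapD (I0_ne_I1 D hp) (pX_lt D hp) (I0_covers D hp) (I1_covers D hp) b

lemma sum_swapAt (D : Fin n → Fin n → ℕ) (hp : (ipts n D).Nonempty) (i : Fin n) :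
    (∑ j, swapAt D hp i j : ℤ) =
      if i = I0 D hp then (∑ j, D (I1 D hp) j : ℤ) - (I1 D hp : ℕ) + (I0 D hp : ℕ)
      else if i = I1 D hp then (∑ j, D (I0 D hp) j : ℤ) - (I0 D hp : ℕ) + (I1 D hp : ℕ)
      else (∑ j, D i j : ℤ) := by
  split
  case isTrue h =>
    rw [h, swapAt]
    exact sum_swap_i0 (I0_ne_I1 D hp) (pX_lt D hp) (I0_covers D hp) (I1_covers D hp)
  split
  case isTrue h' =>
    rename_i h
    rw [h', swapAt]
    exact sum_swap_i1 (I0_ne_I1 D hp) (pX_lt D hp) (I0_covers D hp) (I1_covers D hp)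
  case isFalse h' =>
    rename_i h
    rw [swapAt, swapD_ne h h']

lemma bad_sum_zero (μ : Fin n → ℕ) (b : Fin n → ℝ) :
    ∑ c ∈ (big μ).filter (fun c => (ipts n c.2).Nonempty), sgn c.1 * wt b c.2 = 0 := by
  refine Finset.sum_involution (fun c _ => Phi c) ?_ ?_ ?_ ?_
  · -- cancelling
    rintro ⟨σ, D⟩ ha
    have hp : (ipts n D).Nonempty := (Finset.mem_filter.1 ha).2
    show sgn (⟨σ, D⟩ : Σ _ : Equiv.Perm (Fin n), (Fin n → Fin n → ℕ)).1 *
        wt b (⟨σ, D⟩ : Σ _ : Equiv.Perm (Fin n), (Fin n → Fin n → ℕ)).2 +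
      sgn (Phi ⟨σ, D⟩).1 * wt b (Phi ⟨σ, D⟩).2 = 0
    rw [Phi_spec ⟨σ, D⟩ hp]
    dsimp only
    have h1 : sgn (σ * Equiv.swap (I0 D hp) (I1 D hp)) = - sgn σ :=
      sgn_mul_swap σ (I0_ne_I1 D hp)
    have h2 : wt b (swapAt D hp) = wt b D := wt_swapAt b D hp
    simp only [h1, h2]
    ring
  · -- no fixed point
    rintro ⟨σ, D⟩ ha - heq
    have hp : (ipts n D).Nonempty := (Finset.mem_filter.1 ha).2
    replace heq : Phi ⟨σ, D⟩ = ⟨σ, D⟩ := heq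
    rw [Phi_spec ⟨σ, D⟩ hp] at heq
    have h1 : σ * Equiv.swap (I0 D hp) (I1 D hp) = σ := congrArg Sigma.fst heq
    have h2 : Equiv.swap (I0 D hp) (I1 D hp) = 1 := by
      exact mul_left_cancel (a := σ) (by rw [mul_one]; exact h1)
    have h3 := congrArg (fun e : Equiv.Perm (Fin n) => e (I0 D hp)) h2
    simp [Equiv.swap_apply_left] at h3
    exact I0_ne_I1 D hp h3.symm
  · -- stays in the set
    rintro ⟨σ, D⟩ ha
    have hmem := (Finset.mem_filter.1 ha).1
    have hp : (ipts n D).Nonempty := (Finset.mem_filter.1 ha).2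
    show Phi ⟨σ, D⟩ ∈ _
    rw [Phi_spec ⟨σ, D⟩ hp]
    rw [Finset.mem_filter]
    constructor
    · rw [mem_big] at hmem ⊢
      dsimp only at hmem ⊢
      intro i
      rw [sum_swapAt D hp i]
      rcases eq_or_ne i (I0 D hp) with rfl | h0
      · rw [if_pos rfl]
        have hk : (σ * Equiv.swap (I0 D hp) (I1 D hp)) (I0 D hp) = σ (I1 D hp) := by
          simp [Equiv.Perm.mul_apply, Equiv.swap_apply_left]
        rw [kZ, hk]
        have := hmem (I1 D hp)
        rw [kZ] at this
        omega
      rcases eq_or_ne i (I1 D hp) with rfl | h1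
      · rw [if_neg h0, if_pos rfl]
        have hk : (σ * Equiv.swap (I0 D hp) (I1 D hp)) (I1 D hp) = σ (I0 D hp) := by
          simp [Equiv.Perm.mul_apply, Equiv.swap_apply_right]
        rw [kZ, hk]
        have := hmem (I0 D hp)
        rw [kZ] at this
        omega
      · rw [if_neg h0, if_neg h1]
        have hk : (σ * Equiv.swap (I0 D hp) (I1 D hp)) i = σ i := by
          simp [Equiv.Perm.mul_apply, Equiv.swap_apply_of_ne_of_ne h0 h1]
        rw [kZ, hk]
        have := hmem i
        rw [kZ] at this
        omega
    · exact swapAt_nonempty D hp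
  · -- involutive
    rintro ⟨σ, D⟩ ha
    have hp : (ipts n D).Nonempty := (Finset.mem_filter.1 ha).2
    exact Phi_invol ⟨σ, D⟩ hp

end Involution

section Characterize

variable {n : ℕ}

lemma exists_inversion {σ : Equiv.Perm (Fin n)} (h : σ ≠ 1) :
    ∃ i i' : Fin n, i < i' ∧ σ i' < σ i := by
  by_contra hc
  push_neg at hc
  have hsm : StrictMono ⇑σ := by
    intro a b hab
    rcases lt_trichotomy (σ a) (σ b) with h' | h' | h'
    · exact h'
    · exact absurd (σ.injective h') (ne_of_lt hab)
    · exact absurd h' (not_lt.2 (hc a b hab))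
  have hsm_inv : StrictMono ⇑σ⁻¹ := by
    intro a b hab
    have := hsm.lt_iff_lt (a := σ⁻¹ a) (b := σ⁻¹ b)
    simp only [Equiv.Perm.coe_inv, Equiv.apply_symm_apply] at this
    exact this.1 hab
  have hwf : WellFoundedLT (Fin n) := inferInstance
  refine h (Equiv.ext fun i => le_antisymm ?_ hsm.le_apply)
  have := hsm_inv.le_apply (x := σ i)
  simpa using this

lemma not_covers_pair {μ : Fin n → ℕ} (hμ1 : ∀ i, μ i ≤ n) {σ : Equiv.Perm (Fin n)}
    {D : Fin n → Fin n → ℕ} (hmem : ∀ i, (∑ j, D i j : ℤ) = kZ μ σ i)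
    (hemp : ¬ (ipts n D).Nonempty) (i i' : Fin n) (hne : i ≠ i') :
    ∀ u < n, ∀ v : ℤ, ¬(covers n i (D i) u v ∧ covers n i' (D i') u v) := by
  intro u hu v hcov
  apply hemp
  refine ⟨toLex (u, v), ?_⟩
  rw [mem_ipts]
  simp only [ofLex_toLex]
  constructor
  · rw [mem_box]
    refine ⟨hu, ?_, ?_⟩
    · have h1 : -(i : ℤ) + (PS n (D i) u : ℤ) ≤ v := hcov.1.1
      have h2 : (0 : ℤ) ≤ (PS n (D i) u : ℤ) := Int.natCast_nonneg _
      have h3 : (i : ℕ) < n := i.2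
      omega
    · have h1 : v ≤ H n i (D i) (u + 1) := hcov.1.2
      have h2 : H n i (D i) (u + 1) ≤ H n i (D i) n := H_mono i (D i) (by omega)
      have h3 := H_n i (D i)
      have h4 := hmem i
      rw [kZ] at h4
      have h5 := hμ1 (σ i)
      have h6 : (0 : ℤ) ≤ ((σ i : ℕ) : ℤ) := Int.natCast_nonneg _
      push_cast at h3 h4 h5 ⊢
      omega
  · exact ⟨i, i', hne, hcov.1, hcov.2⟩

lemma good_of_notbad {μ : Fin n → ℕ} (hμ1 : ∀ i, μ i ≤ n) {σ : Equiv.Perm (Fin n)}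
    {D : Fin n → Fin n → ℕ} (hmem : ∀ i, (∑ j, D i j : ℤ) = kZ μ σ i)
    (hemp : ¬ (ipts n D).Nonempty) : Good n D := by
  intro i i' hlt u hu
  exact separation hlt
    (not_covers_pair hμ1 hmem hemp i i' (fun h => absurd (congrArg Fin.val h) (by omega)))
    u hu

lemma perm_eq_one_of_notbad {μ : Fin n → ℕ} (hμ : Antitone μ) (hμ1 : ∀ i, μ i ≤ n)
    {σ : Equiv.Perm (Fin n)} {D : Fin n → Fin n → ℕ}
    (hmem : ∀ i, (∑ j, D i j : ℤ) = kZ μ σ i)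
    (hemp : ¬ (ipts n D).Nonempty) : σ = 1 := by
  by_contra hσ
  obtain ⟨i, i', hlt, hinv⟩ := exists_inversion hσ
  have hne : i ≠ i' := ne_of_lt hlt
  have hsep := separation (show (i : ℕ) < (i' : ℕ) from hlt)
    (not_covers_pair hμ1 hmem hemp i i' hne) (n - 1) (by omega)
  have hn1 : n - 1 + 1 = n := by
    have : 0 < n := i.pos
    omega
  rw [hn1] at hsep
  have h1 : H n i (D i) (n - 1) ≤ H n i (D i) n := H_mono i (D i) (by omega)
  have h2 := H_n i (D i)
  have h3 := H_n i' (D i')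
  have h4 := hmem i
  have h5 := hmem i'
  rw [kZ] at h4 h5
  have h6 : μ (σ i) ≤ μ (σ i') := hμ (le_of_lt hinv)
  have h7 : (σ i' : ℕ) < (σ i : ℕ) := hinv
  push_cast at h2 h3 h4 h5
  omega

end Characterize

section Tableau

variable {n : ℕ}

lemma card_filter_lt {k : ℕ} (hk : k ≤ n) :
    (Finset.univ.filter fun c : Fin n => (c : ℕ) < k).card = k := by
  have h : (Finset.univ.filter fun c : Fin n => (c : ℕ) < k).card = (Finset.range k).card := by
    apply Finset.card_bij (fun (c : Fin n) _ => (c : ℕ))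
    · intro a ha
      rw [Finset.mem_range]
      exact (Finset.mem_filter.1 ha).2
    · intro a ha b hb hab
      exact Fin.ext hab
    · intro m hm
      rw [Finset.mem_range] at hm
      exact ⟨⟨m, lt_of_lt_of_le hm hk⟩, Finset.mem_filter.2 ⟨Finset.mem_univ _, hm⟩, rfl⟩
  rw [h, Finset.card_range]

lemma card_filter_le (c : Fin n) :
    (Finset.univ.filter fun a : Fin n => a ≤ c).card = (c : ℕ) + 1 := by
  have h : (Finset.univ.filter fun a : Fin n => a ≤ c) =
      (Finset.univ.filter fun a : Fin n => (a : ℕ) < (c : ℕ) + 1) := by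
    ext a
    simp only [Finset.mem_filter, Finset.mem_univ, true_and, Fin.le_def]
    omega
  rw [h, card_filter_lt (by omega : (c : ℕ) + 1 ≤ n)]

lemma downset_mem_iff {S : Finset (Fin n)} (hdown : ∀ a b : Fin n, a ≤ b → b ∈ S → a ∈ S)
    (c : Fin n) : c ∈ S ↔ (c : ℕ) < S.card := by
  constructor
  · intro hc
    have hsub : (Finset.univ.filter fun a : Fin n => a ≤ c) ⊆ S := by
      intro a ha
      exact hdown a c (Finset.mem_filter.1 ha).2 hc
    have := Finset.card_le_card hsub
    rw [card_filter_le] at this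
    omega
  · intro hc
    by_contra hcs
    have hsub : S ⊆ Finset.univ.filter fun a : Fin n => (a : ℕ) < (c : ℕ) := by
      intro a ha
      rcases le_or_gt c a with h | h
      · exact absurd (hdown c a h ha) hcs
      · exact Finset.mem_filter.2 ⟨Finset.mem_univ _, h⟩
    have := Finset.card_le_card hsub
    rw [card_filter_lt (le_of_lt c.2)] at this
    omega

lemma card_split (p : Fin n → Prop) [DecidablePred p] (f : Fin n → Fin n) (m : ℕ) :
    (Finset.univ.filter fun c => p c ∧ (f c : ℕ) < m + 1).card
      = (Finset.univ.filter fun c => p c ∧ (f c : ℕ) < m).card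
        + (Finset.univ.filter fun c => p c ∧ (f c : ℕ) = m).card := by
  rw [← Finset.card_union_of_disjoint]
  · congr 1
    ext c
    simp only [Finset.mem_union, Finset.mem_filter, Finset.mem_univ, true_and]
    constructor
    · rintro ⟨hp, hlt⟩
      rcases Nat.lt_or_ge (f c : ℕ) m with h | h
      · exact Or.inl ⟨hp, h⟩
      · exact Or.inr ⟨hp, by omega⟩
    · rintro (⟨hp, h⟩ | ⟨hp, h⟩)
      · exact ⟨hp, by omega⟩
      · exact ⟨hp, by omega⟩
  · rw [Finset.disjoint_left]
    rintro c hc hc'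
    rw [Finset.mem_filter] at hc hc'
    have h1 := hc.2.2
    have h2 := hc'.2.2
    omega

/-- occupation numbers of a tableau -/
def cnt (μ : Fin n → ℕ) (T : Fin n → Fin n → Fin n) : Fin n → Fin n → ℕ :=
  fun i j => (Finset.univ.filter fun c : Fin n => (c : ℕ) < μ i ∧ T i c = j).card

lemma PS_cnt (μ : Fin n → ℕ) (T : Fin n → Fin n → Fin n) (i : Fin n) (m : ℕ) :
    PS n (cnt μ T i) m
      = (Finset.univ.filter fun c : Fin n => (c : ℕ) < μ i ∧ (T i c : ℕ) < m).card := by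
  induction m with
  | zero => simp [PS]
  | succ m ih =>
    rw [PS_succ, ih]
    by_cases hm : m < n
    · rw [card_split (fun c => (c : ℕ) < μ i) (T i) m]
      congr 1
      rw [ext, dif_pos hm, cnt]
      congr 1
      ext c
      simp only [Finset.mem_filter, Finset.mem_univ, true_and, and_congr_right_iff]
      intro
      rw [Fin.ext_iff]
    · have h1 : ext n (cnt μ T i) m = 0 := by rw [ext, dif_neg hm]
      rw [h1]
      have h2 : ∀ c : Fin n, ((T i c : ℕ) < m + 1) = ((T i c : ℕ) < m) := by
        intro c
        have := (T i c).2
        simp only [eq_iff_iff]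
        omega
      simp only [h2]
      omega

lemma sum_cnt (μ : Fin n → ℕ) (hμ1 : ∀ i, μ i ≤ n) (T : Fin n → Fin n → Fin n) (i : Fin n) :
    ∑ j, cnt μ T i j = μ i := by
  rw [← PS_n, PS_cnt]
  have h : (Finset.univ.filter fun c : Fin n => (c : ℕ) < μ i ∧ (T i c : ℕ) < n) =
      Finset.univ.filter fun c : Fin n => (c : ℕ) < μ i := by
    ext c
    simp only [Finset.mem_filter, Finset.mem_univ, true_and, and_iff_left_iff_imp]
    exact fun _ => (T i c).2
  rw [h, card_filter_lt (hμ1 i)]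

lemma cnt_good (μ : Fin n → ℕ) (hμ : Antitone μ) (T : Fin n → Fin n → Fin n)
    (hT2 : ∀ i i' j : Fin n, i < i' → (j : ℕ) < μ i' → T i j < T i' j) :
    Good n (cnt μ T) := by
  intro i i' hlt u hu
  have hkey : (Finset.univ.filter fun c : Fin n => (c : ℕ) < μ i' ∧ (T i' c : ℕ) < u + 1).card
      ≤ (Finset.univ.filter fun c : Fin n => (c : ℕ) < μ i ∧ (T i c : ℕ) < u).card := by
    apply Finset.card_le_card
    intro c hc
    rw [Finset.mem_filter] at hc ⊢
    obtain ⟨-, h1, h2⟩ := hc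
    have hii' : i ≤ i' := le_of_lt (Fin.lt_def.2 hlt)
    have hc1 : (c : ℕ) < μ i := lt_of_lt_of_le h1 (hμ hii')
    have hc2 : T i c < T i' c := hT2 i i' c (Fin.lt_def.2 hlt) h1
    rw [Fin.lt_def] at hc2
    exact ⟨Finset.mem_univ _, hc1, by omega⟩
  rw [H, H, PS_cnt, PS_cnt]
  have := hkey
  omega

/-- read a tableau off a path family -/
def tab (μ : Fin n → ℕ) (D : Fin n → Fin n → ℕ) : Fin n → Fin n → Fin n := fun i c =>
  if h : ∃ m, m < n ∧ (c : ℕ) < PS n (D i) (m + 1) then ⟨Nat.find h, (Nat.find_spec h).1⟩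
  else ⟨0, i.pos⟩

section TabD

variable {μ : Fin n → ℕ} {D : Fin n → Fin n → ℕ}

lemma tab_shape_ex (hsum : ∀ i, PS n (D i) n = μ i) (i : Fin n) {c : Fin n}
    (hc : (c : ℕ) < μ i) : ∃ m, m < n ∧ (c : ℕ) < PS n (D i) (m + 1) := by
  have hn : 0 < n := i.pos
  refine ⟨n - 1, by omega, ?_⟩
  rw [show n - 1 + 1 = n from by omega, hsum i]
  exact hc

lemma tab_val (hsum : ∀ i, PS n (D i) n = μ i) (i : Fin n) {c : Fin n} (hc : (c : ℕ) < μ i) :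
    (tab μ D i c : ℕ) = Nat.find (tab_shape_ex hsum i hc) := by
  rw [tab, dif_pos (tab_shape_ex hsum i hc)]

lemma tab_spec (hsum : ∀ i, PS n (D i) n = μ i) (i : Fin n) {c : Fin n} (hc : (c : ℕ) < μ i) :
    (c : ℕ) < PS n (D i) ((tab μ D i c : ℕ) + 1) := by
  rw [tab_val hsum i hc]
  exact (Nat.find_spec (tab_shape_ex hsum i hc)).2

lemma tab_min (hsum : ∀ i, PS n (D i) n = μ i) (i : Fin n) {c : Fin n} (hc : (c : ℕ) < μ i) :
    PS n (D i) (tab μ D i c : ℕ) ≤ (c : ℕ) := by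
  rcases Nat.eq_zero_or_pos (tab μ D i c : ℕ) with h | h
  · rw [h]; simp [PS]
  · have hmin := Nat.find_min (tab_shape_ex hsum i hc)
      (show (tab μ D i c : ℕ) - 1 < Nat.find (tab_shape_ex hsum i hc) from by
        rw [← tab_val hsum i hc]; omega)
    push_neg at hmin
    have h2 : (tab μ D i c : ℕ) - 1 < n := by
      have := (tab μ D i c).2; omega
    have := hmin h2
    rw [show (tab μ D i c : ℕ) - 1 + 1 = (tab μ D i c : ℕ) from by omega] at this
    omega

lemma tab_weak (hsum : ∀ i, PS n (D i) n = μ i) (i j k : Fin n) (hjk : j ≤ k)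
    (hk : (k : ℕ) < μ i) : tab μ D i j ≤ tab μ D i k := by
  have hj : (j : ℕ) < μ i := lt_of_le_of_lt (Fin.le_def.1 hjk) hk
  rw [Fin.le_def, tab_val hsum i hj, tab_val hsum i hk]
  apply Nat.find_mono
  rintro m ⟨hm, hlt⟩
  exact ⟨hm, lt_of_le_of_lt (by exact_mod_cast Fin.le_def.1 hjk) hlt⟩

lemma tab_zero (hsum : ∀ i, PS n (D i) n = μ i) (i j : Fin n) (hij : μ i ≤ (j : ℕ)) :
    (tab μ D i j : ℕ) = 0 := by
  rw [tab, dif_neg]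
  rintro ⟨m, hm, hlt⟩
  have hle : PS n (D i) (m + 1) ≤ μ i := by
    rcases le_or_gt (m + 1) n with h | h
    · rw [← hsum i]; exact PS_mono (D i) h
    · rw [PS_stable (D i) (by omega : n ≤ m + 1), hsum i]
  omega

lemma tab_col_adj (hμ : Antitone μ) (hsum : ∀ i, PS n (D i) n = μ i) (hgood : Good n D)
    (i i' : Fin n) (hii' : (i' : ℕ) = (i : ℕ) + 1) (c : Fin n)
    (hc : (c : ℕ) < μ i') : tab μ D i c < tab μ D i' c := by
  have hle : i ≤ i' := Fin.le_def.2 (by omega)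
  have hci : (c : ℕ) < μ i := lt_of_lt_of_le hc (hμ hle)
  have hv_n : (tab μ D i c : ℕ) < n := (tab μ D i c).2
  have hspec := tab_spec hsum i hci
  have hmin := tab_min hsum i hci
  have hgd := hgood i i' (by omega) (tab μ D i c : ℕ) hv_n
  rw [H, H] at hgd
  have hPSle : PS n (D i') ((tab μ D i c : ℕ) + 1) ≤ PS n (D i) (tab μ D i c : ℕ) := by
    omega
  rw [Fin.lt_def, tab_val hsum i' hc]
  rw [Nat.lt_find_iff]
  rintro u hu ⟨hun, hlt⟩
  have : PS n (D i') (u + 1) ≤ PS n (D i') ((tab μ D i c : ℕ) + 1) :=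
    PS_mono (D i') (by omega)
  omega

lemma tab_col (hμ : Antitone μ) (hsum : ∀ i, PS n (D i) n = μ i) (hgood : Good n D)
    (i i' : Fin n) (hii' : i < i') (c : Fin n) (hc : (c : ℕ) < μ i') :
    tab μ D i c < tab μ D i' c := by
  have hlt : (i : ℕ) < (i' : ℕ) := hii'
  obtain ⟨g, hg⟩ : ∃ g : ℕ, (i : ℕ) + g + 1 = (i' : ℕ) := ⟨(i' : ℕ) - (i : ℕ) - 1, by omega⟩
  clear hii' hlt
  induction g generalizing i' with
  | zero =>
    exact tab_col_adj hμ hsum hgood i i' (by omega) c hc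
  | succ g ih =>
    have hmid_lt : (i : ℕ) + g + 1 < n := by have := i'.2; omega
    set mid : Fin n := ⟨(i : ℕ) + g + 1, hmid_lt⟩ with hmid
    have hcmid : (c : ℕ) < μ mid := by
      have : mid ≤ i' := Fin.le_def.2 (by simp [hmid]; omega)
      exact lt_of_lt_of_le hc (hμ this)
    have h1 : tab μ D i c < tab μ D mid c := ih mid hcmid (by simp [hmid])
    have h2 : tab μ D mid c < tab μ D i' c :=
      tab_col_adj hμ hsum hgood mid i' (by simp [hmid]; omega) c hc
    exact lt_trans h1 h2

lemma count_tab_lt (hsum : ∀ i, PS n (D i) n = μ i) (hμ1 : ∀ i, μ i ≤ n)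
    (i : Fin n) {m : ℕ} (hm : m ≤ n) :
    (Finset.univ.filter fun c : Fin n => (c : ℕ) < μ i ∧ (tab μ D i c : ℕ) < m).card
      = PS n (D i) m := by
  have hset : (Finset.univ.filter fun c : Fin n => (c : ℕ) < μ i ∧ (tab μ D i c : ℕ) < m)
      = Finset.univ.filter fun c : Fin n => (c : ℕ) < PS n (D i) m := by
    ext c
    simp only [Finset.mem_filter, Finset.mem_univ, true_and]
    constructor
    · rintro ⟨hc, hlt⟩
      rw [tab_val hsum i hc, Nat.find_lt_iff] at hlt
      obtain ⟨u, hum, -, hu⟩ := hlt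
      exact lt_of_lt_of_le hu (PS_mono (D i) (by omega))
    · intro hc
      have hcμ : (c : ℕ) < μ i := by
        have : PS n (D i) m ≤ μ i := by rw [← hsum i]; exact PS_mono (D i) hm
        omega
      refine ⟨hcμ, ?_⟩
      rw [tab_val hsum i hcμ, Nat.find_lt_iff]
      have hm1 : 1 ≤ m := by
        by_contra hm0
        have : m = 0 := by omega
        rw [this] at hc
        simp [PS] at hc
      refine ⟨m - 1, by omega, by omega, ?_⟩
      rw [show m - 1 + 1 = m from by omega]
      exact hc
  rw [hset]
  apply card_filter_lt
  calc PS n (D i) m ≤ PS n (D i) n := PS_mono (D i) hm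
    _ = μ i := hsum i
    _ ≤ n := hμ1 i

lemma cnt_tab (hsum : ∀ i, PS n (D i) n = μ i) (hμ1 : ∀ i, μ i ≤ n) :
    cnt μ (tab μ D) = D := by
  funext i j
  have hj : (j : ℕ) < n := j.2
  have h1 := count_tab_lt hsum hμ1 i (show (j : ℕ) + 1 ≤ n from by omega)
  have h2 := count_tab_lt hsum hμ1 i (show (j : ℕ) ≤ n from by omega)
  have h3 := card_split (fun c : Fin n => (c : ℕ) < μ i) (tab μ D i) (j : ℕ)
  have h4 : PS n (D i) ((j : ℕ) + 1) = PS n (D i) (j : ℕ) + D i j := by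
    rw [PS_succ, ext, dif_pos hj]
  have h5 : cnt μ (tab μ D) i j
      = (Finset.univ.filter fun c : Fin n =>
          (c : ℕ) < μ i ∧ (tab μ D i c : ℕ) = (j : ℕ)).card := by
    rw [cnt]
    congr 1
    ext c
    simp [Fin.ext_iff]
  rw [h5]
  omega

end TabD

section TabT

variable {μ : Fin n → ℕ} {T : Fin n → Fin n → Fin n}

lemma mem_iff_lt_PScnt (hT1 : ∀ i j k : Fin n, j ≤ k → (k : ℕ) < μ i → T i j ≤ T i k)
    (i : Fin n) (m : ℕ) (c : Fin n) :
    (c : ℕ) < PS n (cnt μ T i) m ↔ ((c : ℕ) < μ i ∧ (T i c : ℕ) < m) := by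
  rw [PS_cnt]
  have hdown : ∀ a b : Fin n, a ≤ b →
      b ∈ (Finset.univ.filter fun c : Fin n => (c : ℕ) < μ i ∧ (T i c : ℕ) < m) →
      a ∈ (Finset.univ.filter fun c : Fin n => (c : ℕ) < μ i ∧ (T i c : ℕ) < m) := by
    intro a b hab hb
    rw [Finset.mem_filter] at hb ⊢
    obtain ⟨-, h1, h2⟩ := hb
    have ha1 : (a : ℕ) < μ i := lt_of_le_of_lt (Fin.le_def.1 hab) h1
    have := hT1 i a b hab h1
    rw [Fin.le_def] at this
    exact ⟨Finset.mem_univ _, ha1, by omega⟩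
  rw [← downset_mem_iff hdown c, Finset.mem_filter]
  simp

lemma tab_cnt (hT1 : ∀ i j k : Fin n, j ≤ k → (k : ℕ) < μ i → T i j ≤ T i k)
    (hT3 : ∀ i j : Fin n, μ i ≤ (j : ℕ) → (T i j : ℕ) = 0) :
    tab μ (cnt μ T) = T := by
  funext i c
  rcases lt_or_ge (c : ℕ) (μ i) with hc | hc
  · have hex : ∃ m, m < n ∧ (c : ℕ) < PS n (cnt μ T i) (m + 1) :=
      ⟨(T i c : ℕ), (T i c).2, (mem_iff_lt_PScnt hT1 i ((T i c : ℕ) + 1) c).2 ⟨hc, by omega⟩⟩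
    rw [tab, dif_pos hex]
    apply Fin.ext
    simp only
    rw [Nat.find_eq_iff]
    constructor
    · exact ⟨(T i c).2, (mem_iff_lt_PScnt hT1 i ((T i c : ℕ) + 1) c).2 ⟨hc, by omega⟩⟩
    · rintro u hu ⟨hun, hlt⟩
      rw [mem_iff_lt_PScnt hT1 i (u + 1) c] at hlt
      omega
  · rw [tab, dif_neg]
    · apply Fin.ext
      simp only
      exact (hT3 i c hc).symm
    · rintro ⟨m, hm, hlt⟩
      rw [mem_iff_lt_PScnt hT1 i (m + 1) c] at hlt
      omega

end TabT

lemma wt_cnt (μ : Fin n → ℕ) (b : Fin n → ℝ) (T : Fin n → Fin n → Fin n) :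
    wt b (cnt μ T) = ∏ i : Fin n, ∏ j : Fin n, (if (j : ℕ) < μ i then b (T i j) else 1) := by
  rw [wt]
  refine Finset.prod_congr rfl fun i _ => ?_
  rw [← Finset.prod_filter (fun j : Fin n => (j : ℕ) < μ i) (fun j : Fin n => b (T i j))]
  rw [← Finset.prod_fiberwise_of_maps_to (g := fun c => T i c) (t := Finset.univ)
    (fun _ _ => Finset.mem_univ _) (fun c => b (T i c))]
  refine Finset.prod_congr rfl fun j _ => ?_
  rw [Finset.filter_filter]
  symm
  calc ∏ c ∈ Finset.univ.filter fun c : Fin n => (c : ℕ) < μ i ∧ T i c = j, b (T i c)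
      = ∏ c ∈ Finset.univ.filter fun c : Fin n => (c : ℕ) < μ i ∧ T i c = j, b j := by
        refine Finset.prod_congr rfl fun c hc => ?_
        rw [(Finset.mem_filter.1 hc).2.2]
    _ = b j ^ cnt μ T i j := by rw [Finset.prod_const, cnt]

end Tableau

section Main

open scoped Classical

variable {n : ℕ}

lemma good_sum (μ : Fin n → ℕ) (hμ : Antitone μ) (hμ1 : ∀ i, μ i ≤ n) (b : Fin n → ℝ) :
    ∑ c ∈ (big μ).filter (fun c => ¬ (ipts n c.2).Nonempty), sgn c.1 * wt b c.2
      = ∑ T ∈ (Finset.univ : Finset (Fin n → Fin n → Fin n)).filter (fun T =>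
          (∀ i j k : Fin n, j ≤ k → (k : ℕ) < μ i → T i j ≤ T i k) ∧
          (∀ i i' j : Fin n, i < i' → (j : ℕ) < μ i' → T i j < T i' j) ∧
          (∀ i j : Fin n, μ i ≤ (j : ℕ) → (T i j : ℕ) = 0)),
        ∏ i : Fin n, ∏ j : Fin n, if (j : ℕ) < μ i then b (T i j) else 1 := by
  have hprep : ∀ c : Σ _ : Equiv.Perm (Fin n), (Fin n → Fin n → ℕ),
      c ∈ (big μ).filter (fun c => ¬ (ipts n c.2).Nonempty) →
      c.1 = 1 ∧ (∀ i, PS n (c.2 i) n = μ i) ∧ Good n c.2 := by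
    intro c hc
    have hmem : ∀ i, (∑ j, c.2 i j : ℤ) = kZ μ c.1 i := mem_big.1 (Finset.mem_filter.1 hc).1
    have hemp : ¬ (ipts n c.2).Nonempty := (Finset.mem_filter.1 hc).2
    have hσ : c.1 = 1 := perm_eq_one_of_notbad hμ hμ1 hmem hemp
    refine ⟨hσ, ?_, good_of_notbad hμ1 hmem hemp⟩
    intro i
    have h1 := hmem i
    rw [hσ, kZ] at h1
    simp only [Equiv.Perm.one_apply] at h1
    have h2 := PS_n (c.2 i)
    have h3 : ((∑ j, c.2 i j : ℕ) : ℤ) = ∑ j, (c.2 i j : ℤ) := by push_cast; rfl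
    omega
  refine Finset.sum_nbij' (fun c => tab μ c.2) (fun T => ⟨1, cnt μ T⟩) ?_ ?_ ?_ ?_ ?_
  · intro c hc
    obtain ⟨hσ, hsum, hgood⟩ := hprep c hc
    rw [Finset.mem_filter]
    exact ⟨Finset.mem_univ _,
      fun i j k hjk hk => tab_weak hsum i j k hjk hk,
      fun i i' j hii' hj => tab_col hμ hsum hgood i i' hii' j hj,
      fun i j hij => tab_zero hsum i j hij⟩
  · intro T hT
    rw [Finset.mem_filter] at hT
    obtain ⟨-, hT1, hT2, hT3⟩ := hT
    rw [Finset.mem_filter]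
    constructor
    · rw [mem_big]
      intro i
      have h1 := sum_cnt μ hμ1 T i
      rw [kZ]
      simp only [Equiv.Perm.one_apply]
      have h3 : ((∑ j, cnt μ T i j : ℕ) : ℤ) = ∑ j, (cnt μ T i j : ℤ) := by push_cast; rfl
      omega
    · rw [good_no_int (cnt_good μ hμ T hT2)]
      simp
  · intro c hc
    obtain ⟨hσ, hsum, hgood⟩ := hprep c hc
    obtain ⟨σ, D⟩ := c
    have hD : cnt μ (tab μ D) = D := cnt_tab hsum hμ1
    simp only at hσ hD
    rw [hσ]
    simp only [hD]
  · intro T hT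
    rw [Finset.mem_filter] at hT
    obtain ⟨-, hT1, hT2, hT3⟩ := hT
    exact tab_cnt hT1 hT3
  · intro c hc
    obtain ⟨hσ, hsum, hgood⟩ := hprep c hc
    have h1 : sgn c.1 = 1 := by rw [hσ, sgn]; simp
    rw [h1, one_mul]
    have h2 : wt b c.2 = wt b (cnt μ (tab μ c.2)) := by rw [cnt_tab hsum hμ1]
    rw [h2, wt_cnt]

end Main

end JT

/-- the Schur polynomial is the generating function of semistandard Young
tableaux: `s_μ(b_1,…,b_n) = Σ_{T SSYT of shape μ, entries in {1,…,n}} ∏_{cells c} b_{T(c)}`.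
A tableau is encoded as `T : Fin n → Fin n → Fin n` (row, column, entry, `0`-based), with
entries weakly increasing along rows, strictly increasing down columns, and `0` outside
the shape. -/
theorem schur_eq_tableau_sum (n : ℕ) (μ : Fin n → ℕ) (hμ : Antitone μ)
    (hμ1 : ∀ i, μ i ≤ n) (b : Fin n → ℝ) :
    schur n μ b =
    ∑ T ∈ (Finset.univ : Finset (Fin n → Fin n → Fin n)).filter (fun T =>
        (∀ i j k : Fin n, j ≤ k → (k : ℕ) < μ i → T i j ≤ T i k) ∧
        (∀ i i' j : Fin n, i < i' → (j : ℕ) < μ i' → T i j < T i' j) ∧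
        (∀ i j : Fin n, μ i ≤ (j : ℕ) → (T i j : ℕ) = 0)),
      ∏ i : Fin n, ∏ j : Fin n, if (j : ℕ) < μ i then b (T i j) else 1 := by
  
  classical
  rw [JT.schur_eq_big μ b,
    ← Finset.sum_filter_add_sum_filter_not (JT.big μ) (fun c => (JT.ipts n c.2).Nonempty),
    JT.bad_sum_zero μ b, zero_add]
  exact JT.good_sum μ hμ hμ1 b
end

section
/- The Lindström–Gessel–Viennot identity: for a directed acyclic graph with weights, sources u_1,…,u_l and sinks v_1,…,v_l such that any path from u_j to v_k and any path from u_{j'} to v_{k'} with j < j', k > k' must intersect, the total weight of families of l vertex-disjoint paths from u_j to v_j (j = 1,…,l) equals det[g(u_j, v_k)]_{j,k=1..l}, where g(u,v) is the total weight of all paths from u to v. -/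
open Finset

/-- The weight of a path (a list of vertices): the product of the weights of its edges. -/
def pathWeight {V : Type*} (w : V → V → ℝ) (p : List V) : ℝ :=
  ((p.zip p.tail).map (fun q => w q.1 q.2)).prod

/-- `p` is a directed path from `u` to `v` in the weighted digraph with edge set
`{(x,y) : w x y ≠ 0}`. -/
def IsPath {V : Type*} (w : V → V → ℝ) (u v : V) (p : List V) : Prop :=
  p.head? = some u ∧ p.getLast? = some v ∧ p.Chain' (fun x y => w x y ≠ 0)

/-- The total weight `g(u,v)` of all directed paths from `u` to `v`. -/
noncomputable def totalWeight {V : Type*} (w : V → V → ℝ) (u v : V) : ℝ :=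
  ∑' p : {p : List V // IsPath w u v p}, pathWeight w p.1

set_option linter.unusedSectionVars false

namespace LGVAux

variable {V : Type*} [DecidableEq V]

theorem pathWeight_nil (w : V → V → ℝ) : pathWeight w ([] : List V) = 1 := rfl

theorem pathWeight_single (w : V → V → ℝ) (a : V) : pathWeight w [a] = 1 := rfl

theorem pathWeight_cons_cons (w : V → V → ℝ) (a b : V) (t : List V) :
    pathWeight w (a :: b :: t) = w a b * pathWeight w (b :: t) := rfl

theorem pathWeight_split (w : V → V → ℝ) (a : List V) (x : V) (b : List V) :
    pathWeight w (a ++ x :: b) = pathWeight w (a ++ [x]) * pathWeight w (x :: b) := by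
  induction a with
  | nil => simp [pathWeight_single]
  | cons c t ih =>
    cases t with
    | nil => simp [pathWeight_cons_cons, pathWeight_single]
    | cons d t' =>
      simp only [List.cons_append, pathWeight_cons_cons] at ih ⊢
      rw [ih]; ring

set_option linter.unusedSectionVars false

/-- Split a list at the first element satisfying `P`. -/
def firstSat (P : V → Prop) [DecidablePred P] : List V → Option (List V × V × List V)
  | [] => none
  | a :: t =>
    if P a then some ([], a, t)
    else (firstSat P t).map fun q => (a :: q.1, q.2.1, q.2.2)

theorem firstSat_eq_some {P : V → Prop} [DecidablePred P] :
    ∀ {p pre post : List V} {x : V}, firstSat P p = some (pre, x, post) →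
      p = pre ++ x :: post ∧ P x ∧ ∀ a ∈ pre, ¬ P a := by
  intro p
  induction p with
  | nil => intro pre post x hfs; simp [firstSat] at hfs
  | cons a t ih =>
    intro pre post x hfs
    by_cases hPa : P a
    · simp only [firstSat, if_pos hPa, Option.some.injEq, Prod.mk.injEq] at hfs
      obtain ⟨rfl, rfl, rfl⟩ := hfs
      exact ⟨rfl, hPa, by simp⟩
    · simp only [firstSat, if_neg hPa, Option.map_eq_some_iff] at hfs
      obtain ⟨q, hq, hq2⟩ := hfs
      obtain ⟨e1, e2, e3⟩ := ih hq
      obtain ⟨rfl, rfl, rfl⟩ : a :: q.1 = pre ∧ q.2.1 = x ∧ q.2.2 = post := by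
        simpa [Prod.ext_iff] using hq2
      refine ⟨by simpa using e1, e2, ?_⟩
      intro b hb
      rcases List.mem_cons.mp hb with rfl | hb
      · exact hPa
      · exact e3 b hb

theorem firstSat_append {P : V → Prop} [DecidablePred P] (pre : List V) (x : V) (post : List V)
    (h1 : ∀ a ∈ pre, ¬ P a) (h2 : P x) :
    firstSat P (pre ++ x :: post) = some (pre, x, post) := by
  induction pre with
  | nil => simp [firstSat, h2]
  | cons a t ih =>
    have ha : ¬ P a := h1 a (by simp)
    have ih' := ih (fun b hb => h1 b (by simp [hb]))
    simp only [List.cons_append, firstSat, if_neg ha, List.append_eq, ih', Option.map_some]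

theorem firstSat_isSome {P : V → Prop} [DecidablePred P] {p : List V}
    (h : ∃ a ∈ p, P a) : (firstSat P p).isSome := by
  induction p with
  | nil => simp at h
  | cons a t ih =>
    by_cases hPa : P a
    · simp [firstSat, hPa]
    · simp only [firstSat, if_neg hPa]
      obtain ⟨b, hb, hPb⟩ := h
      rcases List.mem_cons.mp hb with rfl | hb
      · exact absurd hPb hPa
      · have := ih ⟨b, hb, hPb⟩
        rcases Option.isSome_iff_exists.mp this with ⟨q, hq⟩
        simp [hq]

theorem nodup_of_isPath {w : V → V → ℝ} {h : V → ℕ} (hDAG : ∀ x y, w x y ≠ 0 → h x < h y)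
    {u v : V} {p : List V} (hp : IsPath w u v p) : p.Nodup := by
  have hc : p.Chain' (fun x y => h x < h y) := hp.2.2.imp (fun {a b} hw => hDAG a b hw)
  haveI : IsTrans V (fun x y : V => h x < h y) := ⟨fun _ _ _ h1 h2 => lt_trans h1 h2⟩
  have hpw : p.Pairwise (fun x y => h x < h y) := List.isChain_iff_pairwise.mp hc
  exact hpw.imp (fun {a b} hab => fun e => absurd hab (by rw [e]; exact lt_irrefl _))

theorem isPath_finite [Fintype V] {w : V → V → ℝ} {h : V → ℕ}
    (hDAG : ∀ x y, w x y ≠ 0 → h x < h y) (u v : V) :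
    {p : List V | IsPath w u v p}.Finite := by
  apply (List.finite_length_le V (Fintype.card V)).subset
  intro p hp
  exact (nodup_of_isPath hDAG hp).length_le_card

theorem isPath_glue {w : V → V → ℝ} {u v u' v' x : V} {a b c d : List V}
    (h1 : IsPath w u v (a ++ x :: b)) (h2 : IsPath w u' v' (c ++ x :: d)) :
    IsPath w u v' (a ++ x :: d) := by
  obtain ⟨h1h, h1l, h1c⟩ := h1
  obtain ⟨h2h, h2l, h2c⟩ := h2
  unfold List.Chain' at h1c h2c
  rw [List.isChain_append] at h1c h2c
  refine ⟨?_, ?_, ?_⟩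
  · cases a <;> simpa using h1h
  · rw [List.getLast?_append_cons] at h2l ⊢
    exact h2l
  · unfold List.Chain'
    rw [List.isChain_append]
    exact ⟨h1c.1, h2c.2.1, by simpa using h1c.2.2⟩

theorem weight_glue (w : V → V → ℝ) (x : V) (a b c d : List V) :
    pathWeight w (a ++ x :: d) * pathWeight w (c ++ x :: b) =
      pathWeight w (a ++ x :: b) * pathWeight w (c ++ x :: d) := by
  rw [pathWeight_split w a x d, pathWeight_split w c x b, pathWeight_split w a x b,
    pathWeight_split w c x d]
  ring

instance (l₁ l₂ : List V) : Decidable (l₁.Disjoint l₂) :=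
  inferInstanceAs (Decidable (∀ a ∈ l₁, a ∉ l₂))

variable {l : ℕ}

/-- Pairwise disjointness of a family of paths. -/
def Dis (F : Fin l → List V) : Prop := ∀ j j', j ≠ j' → (F j).Disjoint (F j')

instance (F : Fin l → List V) : Decidable (Dis F) :=
  inferInstanceAs (Decidable (∀ j j', j ≠ j' → (F j).Disjoint (F j')))

/-- Indices whose path meets some other path. -/
def badSet (F : Fin l → List V) : Finset (Fin l) :=
  univ.filter (fun i => ∃ j, j ≠ i ∧ ∃ a, a ∈ F i ∧ a ∈ F j)

/-- The Gessel–Viennot tail-swapping involution. -/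
def flip (σ : Equiv.Perm (Fin l)) (F : Fin l → List V) :
    Equiv.Perm (Fin l) × (Fin l → List V) :=
  if hF : (badSet F).Nonempty then
    (firstSat (fun a => ∃ m, m ≠ (badSet F).min' hF ∧ a ∈ F m) (F ((badSet F).min' hF))).elim
      (σ, F) (fun q =>
        if h2 : (univ.filter fun m => m ≠ (badSet F).min' hF ∧ q.2.1 ∈ F m).Nonempty then
          (firstSat (fun a => a = q.2.1)
              (F ((univ.filter fun m => m ≠ (badSet F).min' hF ∧ q.2.1 ∈ F m).min' h2))).elim
            (σ, F) (fun r =>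
              (σ * Equiv.swap ((badSet F).min' hF)
                  ((univ.filter fun m => m ≠ (badSet F).min' hF ∧ q.2.1 ∈ F m).min' h2),
               Function.update
                 (Function.update F ((badSet F).min' hF) (q.1 ++ q.2.1 :: r.2.2))
                 ((univ.filter fun m => m ≠ (badSet F).min' hF ∧ q.2.1 ∈ F m).min' h2)
                 (r.1 ++ q.2.1 :: q.2.2)))
        else (σ, F))
  else (σ, F)

theorem flip_spec {F : Fin l → List V} (hnd : ∀ k, (F k).Nodup) (hF : ¬ Dis F) :
    ∃ (i j : Fin l) (x : V) (ai bi aj bj : List V),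
      i ≠ j ∧ F i = ai ++ x :: bi ∧ F j = aj ++ x :: bj ∧
      (∀ σ : Equiv.Perm (Fin l), flip σ F =
        (σ * Equiv.swap i j,
          Function.update (Function.update F i (ai ++ x :: bj)) j (aj ++ x :: bi))) ∧
      (∀ σ' : Equiv.Perm (Fin l), flip σ'
          (Function.update (Function.update F i (ai ++ x :: bj)) j (aj ++ x :: bi)) =
        (σ' * Equiv.swap i j, F)) := by
  -- the bad set is nonempty
  have hFne : (badSet F).Nonempty := by
    rw [Dis] at hF
    push_neg at hF
    obtain ⟨k, k', hkk', hndisj⟩ := hF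
    have hx : ∃ a, a ∈ F k ∧ a ∈ F k' := by
      by_contra hc
      push_neg at hc
      exact hndisj fun a ha ha' => hc a ha ha'
    obtain ⟨a, ha, ha'⟩ := hx
    exact ⟨k, Finset.mem_filter.mpr ⟨mem_univ _, k', hkk'.symm, a, ha, ha'⟩⟩
  obtain ⟨i, hidef⟩ : ∃ i, (badSet F).min' hFne = i := ⟨_, rfl⟩
  have himem : i ∈ badSet F := hidef ▸ (badSet F).min'_mem hFne
  have hmini : ∀ b ∈ badSet F, i ≤ b := fun b hb => hidef ▸ Finset.min'_le _ b hb
  obtain ⟨-, m0, hm0i, a0, ha0i, ha0m⟩ := Finset.mem_filter.mp himem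
  have hsome1 : (firstSat (fun a => ∃ m, m ≠ i ∧ a ∈ F m) (F i)).isSome :=
    firstSat_isSome ⟨a0, ha0i, m0, hm0i, ha0m⟩
  obtain ⟨q1, hq1⟩ := Option.isSome_iff_exists.mp hsome1
  obtain ⟨ai, x, bi⟩ := q1
  obtain ⟨hFi, hPx, hai⟩ := firstSat_eq_some hq1
  have h2 : (univ.filter fun m => m ≠ i ∧ x ∈ F m).Nonempty := by
    obtain ⟨m, hm, hxm⟩ := hPx
    exact ⟨m, Finset.mem_filter.mpr ⟨mem_univ _, hm, hxm⟩⟩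
  obtain ⟨j, hjdef⟩ : ∃ j, (univ.filter fun m => m ≠ i ∧ x ∈ F m).min' h2 = j := ⟨_, rfl⟩
  have hjmem : j ∈ univ.filter fun m => m ≠ i ∧ x ∈ F m := hjdef ▸ Finset.min'_mem _ h2
  have hminj : ∀ b ∈ univ.filter (fun m => m ≠ i ∧ x ∈ F m), j ≤ b :=
    fun b hb => hjdef ▸ Finset.min'_le _ b hb
  obtain ⟨-, hji, hxj⟩ := Finset.mem_filter.mp hjmem
  have hij : i ≠ j := hji.symm
  have hsome2 : (firstSat (fun a => a = x) (F j)).isSome := firstSat_isSome ⟨x, hxj, rfl⟩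
  obtain ⟨q2, hq2⟩ := Option.isSome_iff_exists.mp hsome2
  obtain ⟨aj, x2, bj⟩ := q2
  obtain ⟨hFj, hx2, haj⟩ := firstSat_eq_some hq2
  rw [hx2] at hFj hq2
  -- nodup consequences
  have hndi := hnd i
  rw [hFi, List.nodup_append] at hndi
  obtain ⟨-, -, hdisji⟩ := hndi
  have hxai : x ∉ ai := fun hxa => hdisji x hxa x (by simp) rfl
  have haibi : ∀ a ∈ ai, a ∉ bi := fun a ha hb => hdisji a ha a (by simp [hb]) rfl
  have hndj := hnd j
  rw [hFj, List.nodup_append] at hndj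
  obtain ⟨-, -, hdisjj⟩ := hndj
  have hxaj : x ∉ aj := fun hxa => hdisjj x hxa x (by simp) rfl
  -- membership facts
  have hxFi : x ∈ F i := by rw [hFi]; simp
  have hxFj : x ∈ F j := by rw [hFj]; simp
  have hjbad : j ∈ badSet F := Finset.mem_filter.mpr ⟨mem_univ _, i, hij, x, hxFj, hxFi⟩
  have hilej : i ≤ j := hmini j hjbad
  -- the flipped family
  set F' := Function.update (Function.update F i (ai ++ x :: bj)) j (aj ++ x :: bi) with hF'def
  have hF'i : F' i = ai ++ x :: bj := by
    rw [hF'def, Function.update_of_ne hij, Function.update_self]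
  have hF'j : F' j = aj ++ x :: bi := by rw [hF'def, Function.update_self]
  have hF'k : ∀ k, k ≠ i → k ≠ j → F' k = F k := by
    intro k hki hkj
    rw [hF'def, Function.update_of_ne hkj, Function.update_of_ne hki]
  have hxF'i : x ∈ F' i := by rw [hF'i]; simp
  have hxF'j : x ∈ F' j := by rw [hF'j]; simp
  -- CLAUSE A
  have clauseA : ∀ σ : Equiv.Perm (Fin l), flip σ F = (σ * Equiv.swap i j, F') := by
    intro σ
    unfold flip
    rw [dif_pos hFne, hidef, hq1]
    simp only [Option.elim]
    rw [dif_pos h2, hjdef, hq2]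
  -- recomputation facts for F'
  have himem' : i ∈ badSet F' :=
    Finset.mem_filter.mpr ⟨mem_univ _, j, hji, x, hxF'i, hxF'j⟩
  have hFne' : (badSet F').Nonempty := ⟨i, himem'⟩
  have hmin' : (badSet F').min' hFne' = i := by
    refine le_antisymm (Finset.min'_le _ i himem') (Finset.le_min' _ _ _ ?_)
    intro b hb
    by_contra hlt
    push_neg at hlt
    have hbi : b ≠ i := ne_of_lt hlt
    have hbj : b ≠ j := ne_of_lt (lt_of_lt_of_le hlt hilej)
    obtain ⟨-, m, hmb, a, habF', hamF'⟩ := Finset.mem_filter.mp hb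
    rw [hF'k b hbi hbj] at habF'
    have hm' : ∃ m', m' ≠ b ∧ a ∈ F m' := by
      by_cases hmi : m = i
      · rw [hmi, hF'i] at hamF'
        rcases List.mem_append.mp hamF' with h | h
        · exact ⟨i, Ne.symm hbi, by rw [hFi]; exact List.mem_append_left _ h⟩
        · rcases List.mem_cons.mp h with rfl | h
          · exact ⟨j, Ne.symm hbj, hxFj⟩
          · exact ⟨j, Ne.symm hbj, by rw [hFj]; exact List.mem_append_right _ (by simp [h])⟩
      · by_cases hmj : m = j
        · rw [hmj, hF'j] at hamF'
          rcases List.mem_append.mp hamF' with h | h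
          · exact ⟨j, Ne.symm hbj, by rw [hFj]; exact List.mem_append_left _ h⟩
          · rcases List.mem_cons.mp h with rfl | h
            · exact ⟨i, Ne.symm hbi, hxFi⟩
            · exact ⟨i, Ne.symm hbi, by rw [hFi]; exact List.mem_append_right _ (by simp [h])⟩
        · exact ⟨m, hmb, by rw [← hF'k m hmi hmj]; exact hamF'⟩
    obtain ⟨m', hm'b, ham'⟩ := hm'
    have hbbad : b ∈ badSet F :=
      Finset.mem_filter.mpr ⟨mem_univ _, m', hm'b, a, habF', ham'⟩
    exact absurd (hmini b hbbad) (not_le.mpr hlt)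
  have hq1' : firstSat (fun a => ∃ m, m ≠ i ∧ a ∈ F' m) (F' i) = some (ai, x, bj) := by
    rw [hF'i]
    refine firstSat_append _ _ _ ?_ ⟨j, hji, hxF'j⟩
    intro a ha hc
    obtain ⟨m, hmi, ham⟩ := hc
    by_cases hmj : m = j
    · rw [hmj, hF'j] at ham
      rcases List.mem_append.mp ham with hh | hh
      · exact hai a ha ⟨j, hji, by rw [hFj]; exact List.mem_append_left _ hh⟩
      · rcases List.mem_cons.mp hh with rfl | hh
        · exact hxai ha
        · exact haibi a ha hh
    · rw [hF'k m hmi hmj] at ham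
      exact hai a ha ⟨m, hmi, ham⟩
  have h2' : (univ.filter fun m => m ≠ i ∧ x ∈ F' m).Nonempty :=
    ⟨j, Finset.mem_filter.mpr ⟨mem_univ _, hji, hxF'j⟩⟩
  have hjdef' : (univ.filter fun m => m ≠ i ∧ x ∈ F' m).min' h2' = j := by
    refine le_antisymm (Finset.min'_le _ j (Finset.mem_filter.mpr ⟨mem_univ _, hji, hxF'j⟩))
      (Finset.le_min' _ _ _ ?_)
    intro b hb
    obtain ⟨-, hbi, hxb⟩ := Finset.mem_filter.mp hb
    by_cases hbj : b = j
    · exact hbj.ge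
    · rw [hF'k b hbi hbj] at hxb
      exact hminj b (Finset.mem_filter.mpr ⟨mem_univ _, hbi, hxb⟩)
  have hq2' : firstSat (fun a => a = x) (F' j) = some (aj, x, bi) := by
    rw [hF'j]
    exact firstSat_append _ _ _ (fun a ha hc => hxaj (hc ▸ ha)) rfl
  have clauseB : ∀ σ' : Equiv.Perm (Fin l), flip σ' F' = (σ' * Equiv.swap i j, F) := by
    intro σ'
    unfold flip
    rw [dif_pos hFne', hmin', hq1']
    simp only [Option.elim]
    rw [dif_pos h2', hjdef', hq2']
    simp only [Option.elim]
    refine Prod.ext rfl ?_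
    show Function.update (Function.update F' i (ai ++ x :: bi)) j (aj ++ x :: bj) = F
    funext k
    by_cases hkj : k = j
    · subst hkj; simp only [Function.update_self]; exact hFj.symm
    · rw [Function.update_of_ne hkj]
      by_cases hki : k = i
      · subst hki; simp only [Function.update_self]; exact hFi.symm
      · rw [Function.update_of_ne hki]
        exact hF'k k hki hkj
  exact ⟨i, j, x, ai, bi, aj, bj, hij, hFi, hFj, clauseA, clauseB⟩

theorem perm_inversion {σ : Equiv.Perm (Fin l)} (hσ : σ ≠ 1) :
    ∃ a b : Fin l, a < b ∧ σ b < σ a := by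
  by_contra hc
  push_neg at hc
  have hsm : StrictMono σ := fun a b hab =>
    lt_of_le_of_ne (hc a b hab) fun e => (ne_of_lt hab) (σ.injective e)
  have hid : ⇑σ = id := by
    haveI : WellFoundedLT (Fin l) := inferInstance
    refine (hsm.range_inj strictMono_id).mp ?_
    rw [Equiv.range_eq_univ, Set.range_id]
  exact hσ (Equiv.ext fun a => congrFun hid a)

end LGVAux

/-- Lindström–Gessel–Viennot: in a finite weighted directed acyclic graph
(acyclicity witnessed by a height function `h` increasing along edges), with sources
`u_1,…,u_l` and sinks `v_1,…,v_l` such that any path `u_j → v_k` and any path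
`u_{j'} → v_{k'}` with `j < j'`, `k' < k` share a vertex, the total weight of families of
`l` pairwise vertex-disjoint paths `u_j → v_j` equals `det[g(u_j, v_k)]`. -/
theorem lindstrom_gessel_viennot {V : Type*} [Fintype V] [DecidableEq V]
    (w : V → V → ℝ) (h : V → ℕ) (hDAG : ∀ x y, w x y ≠ 0 → h x < h y)
    (l : ℕ) (u v : Fin l → V)
    (hcross : ∀ j j' k k' : Fin l, j < j' → k' < k →
      ∀ p p' : List V, IsPath w (u j) (v k) p → IsPath w (u j') (v k') p' →
        ¬ p.Disjoint p') :
    (∑' F : {F : Fin l → List V //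
        (∀ j, IsPath w (u j) (v j) (F j)) ∧
        ∀ j j', j ≠ j' → (F j).Disjoint (F j')},
      ∏ j, pathWeight w (F.1 j)) =
    Matrix.det (Matrix.of fun j k : Fin l => totalWeight w (u j) (v k)) := by
  classical
  have hfin : ∀ a b : V, {p : List V | IsPath w a b p}.Finite :=
    fun a b => LGVAux.isPath_finite hDAG a b
  set PF : V → V → Finset (List V) := fun a b => (hfin a b).toFinset with hPF
  have hPFmem : ∀ a b p, p ∈ PF a b ↔ IsPath w a b p := fun a b p => (hfin a b).mem_toFinset
  have htw : ∀ a b, totalWeight w a b = ∑ p ∈ PF a b, pathWeight w p := by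
    intro a b
    haveI : Fintype {p : List V // IsPath w a b p} := (hfin a b).fintype
    rw [totalWeight, tsum_fintype]
    exact (Finset.sum_subtype (PF a b) (fun p => hPFmem a b p) (pathWeight w)).symm
  -- the family set
  have hFamfin : {F : Fin l → List V | (∀ j, IsPath w (u j) (v j) (F j)) ∧
      ∀ j j', j ≠ j' → (F j).Disjoint (F j')}.Finite := by
    apply (Set.Finite.pi (fun j => hfin (u j) (v j))).subset
    intro F hF j _
    exact hF.1 j
  -- rewrite the LHS as a finite sum
  have hLHS : (∑' F : {F : Fin l → List V //
        (∀ j, IsPath w (u j) (v j) (F j)) ∧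
        ∀ j j', j ≠ j' → (F j).Disjoint (F j')},
      ∏ j, pathWeight w (F.1 j)) =
      ∑ G ∈ hFamfin.toFinset, ∏ j, pathWeight w (G j) := by
    haveI : Fintype {F : Fin l → List V //
        (∀ j, IsPath w (u j) (v j) (F j)) ∧
        ∀ j j', j ≠ j' → (F j).Disjoint (F j')} := hFamfin.fintype
    rw [tsum_fintype]
    exact (Finset.sum_subtype _ (fun G => hFamfin.mem_toFinset)
      (fun G => ∏ j, pathWeight w (G j))).symm
  -- the big sigma finset
  set B := (univ : Finset (Equiv.Perm (Fin l))).sigma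
      (fun σ => Fintype.piFinset (fun j => PF (u j) (v (σ j)))) with hB
  -- rewrite the determinant
  rw [← Matrix.det_transpose, Matrix.det_apply']
  have e1 : ∀ σ : Equiv.Perm (Fin l),
      ∏ j, Matrix.transpose (Matrix.of fun j k : Fin l => totalWeight w (u j) (v k)) (σ j) j =
        ∑ G ∈ Fintype.piFinset (fun j => PF (u j) (v (σ j))), ∏ j, pathWeight w (G j) := by
    intro σ
    rw [← Finset.prod_univ_sum]
    refine Finset.prod_congr rfl fun j _ => ?_
    rw [Matrix.transpose_apply, Matrix.of_apply, htw]
  have e2 : ∑ σ : Equiv.Perm (Fin l), ((Equiv.Perm.sign σ : ℤ) : ℝ) *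
        ∏ j, Matrix.transpose (Matrix.of fun j k : Fin l => totalWeight w (u j) (v k)) (σ j) j =
      ∑ x ∈ B, ((Equiv.Perm.sign x.1 : ℤ) : ℝ) * ∏ j, pathWeight w (x.2 j) := by
    rw [hB, Finset.sum_sigma]
    refine Finset.sum_congr rfl fun σ _ => ?_
    rw [e1 σ, Finset.mul_sum]
  rw [e2]
  rw [← Finset.sum_filter_add_sum_filter_not B (fun x => LGVAux.Dis x.2)]
  -- the involution kills the non-disjoint part
  have hzero : ∑ x ∈ B.filter (fun x => ¬ LGVAux.Dis x.2),
      ((Equiv.Perm.sign x.1 : ℤ) : ℝ) * ∏ j, pathWeight w (x.2 j) = 0 := by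
    have master : ∀ x, x ∈ B.filter (fun x => ¬ LGVAux.Dis x.2) →
        ((⟨(LGVAux.flip x.1 x.2).1, (LGVAux.flip x.1 x.2).2⟩ :
            Σ _ : Equiv.Perm (Fin l), Fin l → List V) ∈ B.filter (fun x => ¬ LGVAux.Dis x.2)) ∧
        (((Equiv.Perm.sign x.1 : ℤ) : ℝ) * ∏ j, pathWeight w (x.2 j)
          + ((Equiv.Perm.sign (LGVAux.flip x.1 x.2).1 : ℤ) : ℝ) *
            ∏ j, pathWeight w ((LGVAux.flip x.1 x.2).2 j) = 0) ∧
        ((LGVAux.flip x.1 x.2).1 ≠ x.1) ∧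
        (LGVAux.flip (LGVAux.flip x.1 x.2).1 (LGVAux.flip x.1 x.2).2 = (x.1, x.2)) := by
      intro x hx
      obtain ⟨hxB, hxnd⟩ := Finset.mem_filter.mp hx
      obtain ⟨-, hxpi⟩ := Finset.mem_sigma.mp hxB
      have hpath : ∀ j, IsPath w (u j) (v (x.1 j)) (x.2 j) :=
        fun j => (hPFmem _ _ _).mp (Fintype.mem_piFinset.mp hxpi j)
      have hnd : ∀ k, (x.2 k).Nodup := fun k => LGVAux.nodup_of_isPath hDAG (hpath k)
      obtain ⟨i, j, y, ai, bi, aj, bj, hij, hFi, hFj, hA, hB'⟩ := LGVAux.flip_spec hnd hxnd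
      have hflip : LGVAux.flip x.1 x.2 = (x.1 * Equiv.swap i j,
          Function.update (Function.update x.2 i (ai ++ y :: bj)) j (aj ++ y :: bi)) := hA x.1
      set F' := Function.update (Function.update x.2 i (ai ++ y :: bj)) j (aj ++ y :: bi)
        with hF'def
      have hF'i : F' i = ai ++ y :: bj := by
        rw [hF'def, Function.update_of_ne hij, Function.update_self]
      have hF'j : F' j = aj ++ y :: bi := by rw [hF'def, Function.update_self]
      have hF'k : ∀ k, k ≠ i → k ≠ j → F' k = x.2 k := by
        intro k hki hkj
        rw [hF'def, Function.update_of_ne hkj, Function.update_of_ne hki]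
      have hyF'i : y ∈ F' i := by rw [hF'i]; simp
      have hyF'j : y ∈ F' j := by rw [hF'j]; simp
      refine ⟨?_, ?_, ?_, ?_⟩
      · have hpair : (⟨(LGVAux.flip x.1 x.2).1, (LGVAux.flip x.1 x.2).2⟩ :
            Σ _ : Equiv.Perm (Fin l), Fin l → List V) = ⟨x.1 * Equiv.swap i j, F'⟩ := by
          rw [hflip]
        rw [hpair]
        refine Finset.mem_filter.mpr ⟨Finset.mem_sigma.mpr ⟨mem_univ _, ?_⟩, ?_⟩
        · refine Fintype.mem_piFinset.mpr fun k => (hPFmem _ _ _).mpr ?_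
          show IsPath w (u k) (v ((x.1 * Equiv.swap i j) k)) (F' k)
          rcases eq_or_ne k i with rfl | hki
          · have he : (x.1 * Equiv.swap k j) k = x.1 j := by
              simp [Equiv.Perm.mul_apply]
            rw [hF'i, he]
            exact LGVAux.isPath_glue (hFi ▸ hpath k) (hFj ▸ hpath j)
          rcases eq_or_ne k j with rfl | hkj
          · have he : (x.1 * Equiv.swap i k) k = x.1 i := by
              simp [Equiv.Perm.mul_apply]
            rw [hF'j, he]
            exact LGVAux.isPath_glue (hFj ▸ hpath k) (hFi ▸ hpath i)
          · have he : (x.1 * Equiv.swap i j) k = x.1 k := by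
              simp [Equiv.Perm.mul_apply, Equiv.swap_apply_of_ne_of_ne hki hkj]
            rw [hF'k k hki hkj, he]
            exact hpath k
        · intro hd
          exact hd i j hij hyF'i hyF'j
      · rw [hflip]
        have hsign : ((Equiv.Perm.sign (x.1 * Equiv.swap i j) : ℤ) : ℝ)
            = -((Equiv.Perm.sign x.1 : ℤ) : ℝ) := by
          rw [Equiv.Perm.sign_mul, Equiv.Perm.sign_swap hij]
          push_cast
          ring
        have hprod : ∏ k, pathWeight w (F' k) = ∏ k, pathWeight w (x.2 k) := by
          rw [← Finset.mul_prod_erase univ (fun k => pathWeight w (F' k)) (mem_univ j),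
            ← Finset.mul_prod_erase univ (fun k => pathWeight w (x.2 k)) (mem_univ j),
            ← Finset.mul_prod_erase (univ.erase j) (fun k => pathWeight w (F' k))
              (Finset.mem_erase.mpr ⟨hij, mem_univ i⟩),
            ← Finset.mul_prod_erase (univ.erase j) (fun k => pathWeight w (x.2 k))
              (Finset.mem_erase.mpr ⟨hij, mem_univ i⟩)]
          have hrest : ∏ k ∈ (univ.erase j).erase i, pathWeight w (F' k)
              = ∏ k ∈ (univ.erase j).erase i, pathWeight w (x.2 k) := by
            refine Finset.prod_congr rfl fun k hk => ?_
            obtain ⟨hki, hk2⟩ := Finset.mem_erase.mp hk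
            obtain ⟨hkj, -⟩ := Finset.mem_erase.mp hk2
            rw [hF'k k hki hkj]
          rw [hrest, hF'j, hF'i, hFi, hFj, ← mul_assoc, ← mul_assoc]
          congr 1
          exact LGVAux.weight_glue w y aj bj ai bi
        show ((Equiv.Perm.sign x.1 : ℤ) : ℝ) * ∏ k, pathWeight w (x.2 k)
          + ((Equiv.Perm.sign (x.1 * Equiv.swap i j) : ℤ) : ℝ) * ∏ k, pathWeight w (F' k) = 0
        rw [hsign, hprod]
        ring
      · intro hEq
        rw [hflip] at hEq
        have h2 : x.1 * Equiv.swap i j = x.1 := hEq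
        exact hij (Equiv.mul_swap_eq_iff.mp h2)
      · rw [hflip]
        show LGVAux.flip (x.1 * Equiv.swap i j) F' = (x.1, x.2)
        rw [hB' (x.1 * Equiv.swap i j), mul_assoc, Equiv.swap_mul_self, mul_one]
    refine Finset.sum_involution
      (fun x _ => ⟨(LGVAux.flip x.1 x.2).1, (LGVAux.flip x.1 x.2).2⟩)
      (fun x hx => (master x hx).2.1)
      (fun x hx _ hEq => (master x hx).2.2.1 (congrArg Sigma.fst hEq))
      (fun x hx => (master x hx).1)
      (fun x hx => ?_)
    have hfb := (master x hx).2.2.2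
    show (⟨(LGVAux.flip (LGVAux.flip x.1 x.2).1 (LGVAux.flip x.1 x.2).2).1,
        (LGVAux.flip (LGVAux.flip x.1 x.2).1 (LGVAux.flip x.1 x.2).2).2⟩ :
        Σ _ : Equiv.Perm (Fin l), Fin l → List V) = x
    rw [hfb]
  rw [hzero, add_zero, hLHS]
  -- on the disjoint part the permutation is the identity
  have hone : ∀ x ∈ B.filter (fun x => LGVAux.Dis x.2), x.1 = 1 := by
    intro x hx
    obtain ⟨hxB, hxd⟩ := Finset.mem_filter.mp hx
    obtain ⟨-, hxpi⟩ := Finset.mem_sigma.mp hxB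
    have hpath : ∀ j, IsPath w (u j) (v (x.1 j)) (x.2 j) :=
      fun j => (hPFmem _ _ _).mp (Fintype.mem_piFinset.mp hxpi j)
    by_contra hne
    obtain ⟨a, b, hab, hba⟩ := LGVAux.perm_inversion hne
    exact hcross a b (x.1 a) (x.1 b) hab hba (x.2 a) (x.2 b) (hpath a) (hpath b)
      (hxd a b (ne_of_lt hab))
  -- identify the disjoint part with the families
  refine (Finset.sum_bij (fun (G : Fin l → List V) (hG : G ∈ hFamfin.toFinset) =>
      (⟨1, G⟩ : Σ _ : Equiv.Perm (Fin l), Fin l → List V)) ?_ ?_ ?_ ?_)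
  · intro G hG
    rw [Set.Finite.mem_toFinset] at hG
    refine Finset.mem_filter.mpr ⟨Finset.mem_sigma.mpr ⟨mem_univ _, ?_⟩, hG.2⟩
    exact Fintype.mem_piFinset.mpr fun j => (hPFmem _ _ _).mpr (hG.1 j)
  · intro G hG G' hG' hEq
    exact congrArg Sigma.snd hEq
  · intro x hx
    obtain ⟨σx, Fx⟩ := x
    have hx1 : σx = 1 := hone ⟨σx, Fx⟩ hx
    subst hx1
    obtain ⟨hxB, hxd⟩ := Finset.mem_filter.mp hx
    obtain ⟨-, hxpi⟩ := Finset.mem_sigma.mp hxB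
    have hpath : ∀ j, IsPath w (u j) (v j) (Fx j) :=
      fun j => (hPFmem _ _ _).mp (Fintype.mem_piFinset.mp hxpi j)
    exact ⟨Fx, Set.Finite.mem_toFinset _ |>.mpr ⟨hpath, hxd⟩, rfl⟩
  · intro G hG
    have : ((Equiv.Perm.sign (1 : Equiv.Perm (Fin l)) : ℤ) : ℝ) = 1 := by simp
    rw [this, one_mul]
end

section
/- Let λ be a partition. λ admits a tiling of its Young diagram by dominoes if and only if the number of cells (i,j) in the diagram with i+j even equals the number of cells with i+j odd. -/
open Finset

/-- Two cells of `ℕ × ℕ` are adjacent if they share an edge. -/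
def CellAdjacent (c d : ℕ × ℕ) : Prop :=
  (c.1 = d.1 ∧ (c.2 = d.2 + 1 ∨ d.2 = c.2 + 1)) ∨
  (c.2 = d.2 ∧ (c.1 = d.1 + 1 ∨ d.1 = c.1 + 1))

/-- A Young diagram admits a domino tiling: its cells can be partitioned into pairs of
adjacent cells, encoded as a fixed-point-free involution on the cells pairing each cell
with the other half of its domino. -/
def HasDominoTiling (lam : YoungDiagram) : Prop :=
  ∃ f : ℕ × ℕ → ℕ × ℕ, ∀ c ∈ lam.cells,
    f c ∈ lam.cells ∧ f (f c) = c ∧ f c ≠ c ∧ CellAdjacent c (f c)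

lemma DT.count_aux (n r : ℕ) :
    (((range n).biUnion (fun k => Finset.HasAntidiagonal.antidiagonal k)).filter
      (fun c : ℕ × ℕ => (c.1 + c.2) % 2 = r)).card
      = ∑ k ∈ range n, if k % 2 = r then k + 1 else 0 := by
  rw [filter_biUnion, card_biUnion]
  · apply Finset.sum_congr rfl
    intro k _
    by_cases h : k % 2 = r
    · rw [filter_true_of_mem, Nat.card_antidiagonal, if_pos h]
      intro c hc
      rw [Finset.HasAntidiagonal.mem_antidiagonal] at hc
      simp [hc, h]
    · rw [filter_false_of_mem, if_neg h]
      · simp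
      · intro c hc
        rw [Finset.HasAntidiagonal.mem_antidiagonal] at hc
        simp [hc, h]
  · intro a _ b _ hab
    simp only [disjoint_left]
    intro c hc hc'
    rw [mem_filter, Finset.HasAntidiagonal.mem_antidiagonal] at hc hc'
    exact hab (hc.1 ▸ hc'.1.symm ▸ rfl)

lemma DT.sum_parity (n : ℕ) :
    (if n % 2 = 0 then (∑ k ∈ range n, if k % 2 = 1 then k + 1 else 0)
        = (∑ k ∈ range n, if k % 2 = 0 then k + 1 else 0) + n / 2
     else (∑ k ∈ range n, if k % 2 = 0 then k + 1 else 0)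
        = (∑ k ∈ range n, if k % 2 = 1 then k + 1 else 0) + (n + 1) / 2) := by
  induction n with
  | zero => simp
  | succ m ih =>
    rw [Finset.sum_range_succ, Finset.sum_range_succ]
    rcases Nat.even_or_odd m with hm | hm
    · have h0 : m % 2 = 0 := Nat.even_iff.mp hm
      rw [if_pos h0] at ih
      rw [if_neg (show ¬((m+1)%2 = 0) by omega), if_neg (show ¬(m%2 = 1) by omega),
        if_pos h0]
      omega
    · have h0 : m % 2 = 1 := Nat.odd_iff.mp hm
      rw [if_neg (show ¬(m%2 = 0) by omega)] at ih
      rw [if_pos (show (m+1)%2 = 0 by omega), if_pos h0, if_neg (show ¬(m%2 = 0) by omega)]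
      omega

lemma DT.stair_ne (n : ℕ) (hn : 1 ≤ n) :
    (∑ k ∈ range n, if k % 2 = 0 then k + 1 else 0)
      ≠ (∑ k ∈ range n, if k % 2 = 1 then k + 1 else 0) := by
  have := DT.sum_parity n
  by_cases h : n % 2 = 0 <;> simp [h] at this <;> omega

lemma DT.memrow (lam : YoungDiagram) {c : ℕ × ℕ} (h : c ∈ lam.cells) :
    c.2 < lam.rowLen c.1 := by
  rw [← YoungDiagram.mem_iff_lt_rowLen, Prod.mk.eta]
  exact (YoungDiagram.mem_cells _).mp h

lemma DT.removeH (lam : YoungDiagram) (i : ℕ) (h : lam.rowLen (i+1) + 2 ≤ lam.rowLen i) :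
    IsLowerSet (((lam.cells.erase (i, lam.rowLen i - 1)).erase (i, lam.rowLen i - 2) :
      Finset (ℕ × ℕ)) : Set (ℕ × ℕ)) := by
  set L := lam.rowLen i with hL
  intro c d hdc hc
  simp only [Finset.mem_coe, Finset.mem_erase] at hc ⊢
  have hclam : c ∈ lam.cells := hc.2.2
  have hdlam : d ∈ lam.cells := lam.isLowerSet hdc hclam
  refine ⟨?_, ?_, hdlam⟩ <;> rintro rfl
  all_goals {
    have h1 : i ≤ c.1 := hdc.1
    have h2 : L - 2 ≤ c.2 := le_trans (by omega) hdc.2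
    have hcr : c.2 < lam.rowLen c.1 := DT.memrow lam hclam
    have : lam.rowLen c.1 ≤ L := lam.rowLen_anti i c.1 h1
    rcases Nat.eq_or_lt_of_le h1 with h1' | h1'
    · have hc1 : c.1 = i := h1'.symm
      have : c.2 = L - 1 ∨ c.2 = L - 2 := by omega
      rcases this with h' | h'
      · exact hc.2.1 (by rw [← Prod.mk.eta (p := c), hc1, h'])
      · exact hc.1 (by rw [← Prod.mk.eta (p := c), hc1, h'])
    · have : lam.rowLen c.1 ≤ lam.rowLen (i+1) := lam.rowLen_anti _ _ h1'
      omega }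

lemma DT.removeV (lam : YoungDiagram) (i : ℕ) (h : lam.rowLen i = lam.rowLen (i+1))
    (h2 : lam.rowLen (i+2) < lam.rowLen i) :
    IsLowerSet (((lam.cells.erase (i, lam.rowLen i - 1)).erase (i+1, lam.rowLen i - 1) :
      Finset (ℕ × ℕ)) : Set (ℕ × ℕ)) := by
  set L := lam.rowLen i with hL
  intro c d hdc hc
  simp only [Finset.mem_coe, Finset.mem_erase] at hc ⊢
  have hclam : c ∈ lam.cells := hc.2.2
  have hdlam : d ∈ lam.cells := lam.isLowerSet hdc hclam
  refine ⟨?_, ?_, hdlam⟩ <;> rintro rfl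
  all_goals {
    have h1 : i ≤ c.1 := le_trans (by omega) hdc.1
    have hh2 : L - 1 ≤ c.2 := hdc.2
    have hcr : c.2 < lam.rowLen c.1 := DT.memrow lam hclam
    have hle : lam.rowLen c.1 ≤ L := lam.rowLen_anti i c.1 h1
    have hc2 : c.2 = L - 1 := by omega
    have h1' : c.1 ≤ i + 1 := by
      by_contra hgt
      have : lam.rowLen c.1 ≤ lam.rowLen (i+2) := lam.rowLen_anti _ _ (by omega)
      omega
    have : c.1 = i ∨ c.1 = i + 1 := by omega
    rcases this with h' | h'
    · exact hc.2.1 (by rw [← Prod.mk.eta (p := c), h', hc2])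
    · exact hc.1 (by rw [← Prod.mk.eta (p := c), h', hc2]) }

lemma DT.exists_removable (lam : YoungDiagram) (hne : lam.cells.Nonempty)
    (hbal : (lam.cells.filter (fun c => (c.1 + c.2) % 2 = 0)).card =
        (lam.cells.filter (fun c => (c.1 + c.2) % 2 = 1)).card) :
    ∃ (c d : ℕ × ℕ) (mu : YoungDiagram), c ∈ lam.cells ∧ d ∈ lam.cells ∧ c ≠ d ∧
      CellAdjacent c d ∧ mu.cells = (lam.cells.erase c).erase d := by
  by_cases hA : ∃ i, lam.rowLen (i+1) + 2 ≤ lam.rowLen i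
  · obtain ⟨i, hi⟩ := hA
    set L := lam.rowLen i with hL
    refine ⟨(i, L - 1), (i, L - 2), ⟨_, DT.removeH lam i hi⟩, ?_, ?_, ?_, ?_, rfl⟩
    · exact (YoungDiagram.mem_cells _).mpr (YoungDiagram.mem_iff_lt_rowLen.mpr (by omega))
    · exact (YoungDiagram.mem_cells _).mpr (YoungDiagram.mem_iff_lt_rowLen.mpr (by omega))
    · intro h; rw [Prod.mk.injEq] at h; omega
    · left; exact ⟨rfl, Or.inl (by omega)⟩
  by_cases hB : ∃ i, lam.rowLen i = lam.rowLen (i+1) ∧ lam.rowLen (i+2) < lam.rowLen i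
  · obtain ⟨i, heq, hlt⟩ := hB
    set L := lam.rowLen i with hL
    refine ⟨(i, L - 1), (i+1, L - 1), ⟨_, DT.removeV lam i heq hlt⟩, ?_, ?_, ?_, ?_, rfl⟩
    · exact (YoungDiagram.mem_cells _).mpr (YoungDiagram.mem_iff_lt_rowLen.mpr (by omega))
    · exact (YoungDiagram.mem_cells _).mpr (YoungDiagram.mem_iff_lt_rowLen.mpr (by omega))
    · intro h; rw [Prod.mk.injEq] at h; omega
    · right; exact ⟨rfl, Or.inr rfl⟩
  -- staircase case: derive contradiction with balance
  exfalso
  push_neg at hA hB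
  -- a row that is empty
  have hzero : ∃ m, lam.rowLen m = 0 := by
    by_contra hz
    push_neg at hz
    have hinj : ∀ m, (m, 0) ∈ lam.cells := fun m =>
      (YoungDiagram.mem_cells _).mpr (YoungDiagram.mem_iff_lt_rowLen.mpr (Nat.pos_of_ne_zero (hz m)))
    have : (range (lam.cells.card + 1)).card ≤ lam.cells.card := by
      apply Finset.card_le_card_of_injOn (fun m => (m, 0)) (fun m _ => hinj m)
      intro a _ b _ hab
      exact congrArg Prod.fst hab
    simp at this
  -- no two consecutive equal nonzero rows
  have hstrict : ∀ i, 0 < lam.rowLen i → lam.rowLen (i+1) < lam.rowLen i := by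
    intro i hpos
    by_contra hge
    push_neg at hge
    have heq : lam.rowLen (i+1) = lam.rowLen i :=
      le_antisymm (lam.rowLen_anti i (i+1) (by omega)) hge
    set L := lam.rowLen i with hL
    have key : ∀ j, lam.rowLen (i + j) = L ∧ lam.rowLen (i + j + 1) = L := by
      intro j
      induction j with
      | zero => exact ⟨rfl, heq⟩
      | succ m ihm =>
        refine ⟨by rw [show i + (m+1) = i + m + 1 by ring]; exact ihm.2, ?_⟩
        have h1 := hB (i + m) (by rw [ihm.1, ihm.2])
        have h2 : lam.rowLen (i + m + 2) ≤ L := ihm.1 ▸ lam.rowLen_anti _ _ (by omega)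
        have : lam.rowLen (i + m + 2) = L := by
          rw [ihm.1] at h1; omega
        rw [show i + (m+1) + 1 = i + m + 2 by ring, this]
    obtain ⟨m, hm⟩ := hzero
    have := (key m).1
    have : lam.rowLen (i + m) ≤ lam.rowLen m := lam.rowLen_anti _ _ (by omega)
    omega
  set n := lam.rowLen 0 with hn0
  have hstair : ∀ i, lam.rowLen i = n - i := by
    intro i
    induction i with
    | zero => simp [hn0]
    | succ m ihm =>
      rcases Nat.eq_zero_or_pos (lam.rowLen m) with h | h
      · have : lam.rowLen (m+1) ≤ 0 := h ▸ lam.rowLen_anti m (m+1) (by omega)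
        omega
      · have h1 := hstrict m h
        have h2 := hA m
        omega
  have hn : 1 ≤ n := by
    obtain ⟨c, hc⟩ := hne
    have := DT.memrow lam hc
    have := lam.rowLen_anti 0 c.1 (by omega)
    omega
  have hcells : lam.cells = (range n).biUnion (fun k => Finset.HasAntidiagonal.antidiagonal k) := by
    ext ⟨i, j⟩
    rw [YoungDiagram.mem_cells, YoungDiagram.mem_iff_lt_rowLen, hstair i]
    simp only [mem_biUnion, mem_range, Finset.HasAntidiagonal.mem_antidiagonal]
    constructor
    · intro h; exact ⟨i + j, by omega, rfl⟩
    · rintro ⟨k, hk, rfl⟩; omega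
  rw [hcells, DT.count_aux, DT.count_aux] at hbal
  exact DT.stair_ne n hn hbal

lemma DT.back : ∀ N (lam : YoungDiagram), lam.cells.card ≤ N →
    (lam.cells.filter (fun c => (c.1 + c.2) % 2 = 0)).card =
        (lam.cells.filter (fun c => (c.1 + c.2) % 2 = 1)).card →
    HasDominoTiling lam := by
  intro N
  induction N with
  | zero =>
    intro lam hcard _
    rw [Nat.le_zero, Finset.card_eq_zero] at hcard
    exact ⟨id, fun c hc => absurd hc (by simp [hcard])⟩
  | succ N ih =>
    intro lam hcard hbal
    rcases Finset.eq_empty_or_nonempty lam.cells with he | hne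
    · exact ⟨id, fun c hc => absurd hc (by simp [he])⟩
    obtain ⟨c, d, mu, hc, hd, hcd, hadj, hmu⟩ := DT.exists_removable lam hne hbal
    have hpar : (c.1 + c.2) % 2 ≠ (d.1 + d.2) % 2 := by
      unfold CellAdjacent at hadj; omega
    have hdc : d ∈ lam.cells.erase c := Finset.mem_erase.mpr ⟨fun h => hcd h.symm, hd⟩
    have hmucard : mu.cells.card + 2 = lam.cells.card := by
      rw [hmu, Finset.card_erase_of_mem hdc, Finset.card_erase_of_mem hc]
      have : 1 ≤ lam.cells.card := Finset.card_pos.mpr hne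
      have : 2 ≤ lam.cells.card := by
        by_contra hlt
        have h1 : lam.cells.card = 1 := by omega
        obtain ⟨a, ha⟩ := Finset.card_eq_one.mp h1
        rw [ha] at hc hd
        simp at hc hd
        exact hcd (hc.trans hd.symm)
      omega
    have hfil : ∀ r : ℕ, (mu.cells.filter (fun x => (x.1 + x.2) % 2 = r)).card + 1 =
        (lam.cells.filter (fun x => (x.1 + x.2) % 2 = r)).card ∨
        ((c.1 + c.2) % 2 ≠ r ∧ (d.1 + d.2) % 2 ≠ r) := by
      intro r
      by_cases hcr : (c.1 + c.2) % 2 = r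
      · left
        have hdr : (d.1 + d.2) % 2 ≠ r := fun h => hpar (hcr.trans h.symm)
        rw [hmu, Finset.filter_erase, Finset.filter_erase,
          Finset.erase_eq_of_notMem (by simp [hdr]),
          Finset.card_erase_of_mem (Finset.mem_filter.mpr ⟨hc, hcr⟩)]
        have : c ∈ lam.cells.filter (fun x => (x.1 + x.2) % 2 = r) :=
          Finset.mem_filter.mpr ⟨hc, hcr⟩
        have := Finset.card_pos.mpr ⟨c, this⟩
        omega
      · by_cases hdr : (d.1 + d.2) % 2 = r
        · left
          rw [hmu, Finset.filter_erase, Finset.filter_erase,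
            Finset.card_erase_of_mem (Finset.mem_erase.mpr
              ⟨fun h => hcd h.symm, Finset.mem_filter.mpr ⟨hd, hdr⟩⟩),
            Finset.erase_eq_of_notMem (by simp [hcr])]
          have : d ∈ lam.cells.filter (fun x => (x.1 + x.2) % 2 = r) :=
            Finset.mem_filter.mpr ⟨hd, hdr⟩
          have := Finset.card_pos.mpr ⟨d, this⟩
          omega
        · right; exact ⟨hcr, hdr⟩
    have h0 := hfil 0
    have h1 := hfil 1
    have hmubal : (mu.cells.filter (fun x => (x.1 + x.2) % 2 = 0)).card =
        (mu.cells.filter (fun x => (x.1 + x.2) % 2 = 1)).card := by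
      rcases h0 with h0 | h0
      · rcases h1 with h1 | h1
        · omega
        · omega
      · omega
    obtain ⟨g, hg⟩ := ih mu (by omega) hmubal
    have hmusub : ∀ x ∈ mu.cells, x ∈ lam.cells ∧ x ≠ c ∧ x ≠ d := by
      intro x hx
      rw [hmu, Finset.mem_erase, Finset.mem_erase] at hx
      exact ⟨hx.2.2, hx.2.1, hx.1⟩
    refine ⟨fun x => if x = c then d else if x = d then c else g x, ?_⟩
    intro x hx
    dsimp only
    by_cases hxc : x = c
    · subst hxc
      rw [if_pos rfl, if_neg (show ¬(d = x) from fun h => hcd h.symm), if_pos rfl]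
      exact ⟨hd, rfl, fun h => hcd h.symm, hadj⟩
    by_cases hxd : x = d
    · subst hxd
      rw [if_neg hxc, if_pos rfl, if_pos rfl]
      refine ⟨hc, rfl, hcd, ?_⟩
      unfold CellAdjacent at hadj ⊢
      omega
    · have hxmu : x ∈ mu.cells := by
        rw [hmu, Finset.mem_erase, Finset.mem_erase]
        exact ⟨hxd, hxc, hx⟩
      obtain ⟨hg1, hg2, hg3, hg4⟩ := hg x hxmu
      obtain ⟨hgl, hgc, hgd⟩ := hmusub _ hg1
      rw [if_neg hxc, if_neg hxd, if_neg hgc, if_neg hgd]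
      exact ⟨hgl, hg2, hg3, hg4⟩

/-- a partition admits a domino tiling of its Young diagram if and only if
the number of cells `(i,j)` with `i+j` even equals the number of cells with `i+j` odd. -/
theorem hasDominoTiling_iff_balanced (lam : YoungDiagram) :
    HasDominoTiling lam ↔
      (lam.cells.filter (fun c => (c.1 + c.2) % 2 = 0)).card =
        (lam.cells.filter (fun c => (c.1 + c.2) % 2 = 1)).card := by
  constructor
  · rintro ⟨f, hf⟩
    apply Finset.card_nbij' f f
    · intro a ha
      rw [Finset.mem_coe, Finset.mem_filter] at ha ⊢
      obtain ⟨h1, h2, h3, h4⟩ := hf a ha.1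
      refine ⟨h1, ?_⟩
      have := ha.2
      unfold CellAdjacent at h4
      omega
    · intro a ha
      rw [Finset.mem_coe, Finset.mem_filter] at ha ⊢
      obtain ⟨h1, h2, h3, h4⟩ := hf a ha.1
      refine ⟨h1, ?_⟩
      have := ha.2
      unfold CellAdjacent at h4
      omega
    · intro a ha
      rw [Finset.mem_coe, Finset.mem_filter] at ha
      exact (hf a ha.1).2.1
    · intro a ha
      rw [Finset.mem_coe, Finset.mem_filter] at ha
      exact (hf a ha.1).2.1
  · intro hbal
    exact DT.back lam.cells.card lam le_rfl hbal
end
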